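/- arXiv:2502.06153 — 6 statements merged into one kernel-verified Lean document; each statement's English description precedes it below -/
import Mathlib

section
/- Let A be a real third-order tensor of size n1 × n2 × n3 and let r1 ≤ n1, r2 ≤ n2, r3 ≤ n3 be given. Then there exist a core tensor G ∈ ℝ^{r1×r2×r3} and matrices U^{(1)} ∈ ℝ^{n1×r1}, U^{(2)} ∈ ℝ^{n2×r2}, U^{(3)} ∈ ℝ^{n3×r3} such that ‖A − G ×₁ U^{(1)} ×₂ U^{(2)} ×₃ U^{(3)}‖_F² ≤ Σ_{r=r1+1}^{n1} σ_r(A^{(1)})² + Σ_{r=r2+1}^{n2} σ_r(A^{(2)})² + Σ_{r=r3+1}^{n3} σ_r(A^{(3)})². -/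
noncomputable section
open Finset Matrix

/-- Frobenius norm of a third-order tensor. -/
def frob3 {n1 n2 n3 : ℕ} (A : Fin n1 → Fin n2 → Fin n3 → ℝ) : ℝ :=
  Real.sqrt (∑ p, ∑ q, ∑ k, A p q k ^ 2)

/-- Mode-1 unfolding of a third-order tensor. -/
def unfold1 {n1 n2 n3 : ℕ} (A : Fin n1 → Fin n2 → Fin n3 → ℝ) :
    Matrix (Fin n1) (Fin n2 × Fin n3) ℝ :=
  Matrix.of fun p qk => A p qk.1 qk.2

/-- Mode-2 unfolding of a third-order tensor. -/
def unfold2 {n1 n2 n3 : ℕ} (A : Fin n1 → Fin n2 → Fin n3 → ℝ) :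
    Matrix (Fin n2) (Fin n1 × Fin n3) ℝ :=
  Matrix.of fun q pk => A pk.1 q pk.2

/-- Mode-3 unfolding of a third-order tensor. -/
def unfold3 {n1 n2 n3 : ℕ} (A : Fin n1 → Fin n2 → Fin n3 → ℝ) :
    Matrix (Fin n3) (Fin n1 × Fin n2) ℝ :=
  Matrix.of fun k pq => A pq.1 pq.2 k

/-- `sval E r` is the `(r+1)`-th largest singular value of `E`, i.e. the square root
of the `(r+1)`-th largest eigenvalue of `E * Eᵀ` (here `Eᴴ = Eᵀ` over `ℝ`). -/
def sval {n : ℕ} {ι : Type*} [Fintype ι] (E : Matrix (Fin n) ι ℝ) (r : Fin n) : ℝ :=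
  Real.sqrt (((Matrix.isHermitian_mul_conjTranspose_self E).eigenvalues ∘
    Tuple.sort (Matrix.isHermitian_mul_conjTranspose_self E).eigenvalues) r.rev)

/-- Tucker product `G ×₁ U1 ×₂ U2 ×₃ U3`. -/
def tucker {n1 n2 n3 r1 r2 r3 : ℕ} (G : Fin r1 → Fin r2 → Fin r3 → ℝ)
    (U1 : Matrix (Fin n1) (Fin r1) ℝ) (U2 : Matrix (Fin n2) (Fin r2) ℝ)
    (U3 : Matrix (Fin n3) (Fin r3) ℝ) : Fin n1 → Fin n2 → Fin n3 → ℝ :=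
  fun p q k => ∑ a, ∑ b, ∑ c, G a b c * U1 p a * U2 q b * U3 k c

/-! ### Auxiliary sum-commutation lemmas -/

section sums

variable {α β γ δ : Type*} [Fintype α] [Fintype β] [Fintype γ] [Fintype δ]

lemma swap13 (f : α → β → γ → ℝ) :
    ∑ a, ∑ b, ∑ c, f a b c = ∑ c, ∑ b, ∑ a, f a b c := by
  calc ∑ a, ∑ b, ∑ c, f a b c = ∑ b, ∑ a, ∑ c, f a b c := Finset.sum_comm
    _ = ∑ b, ∑ c, ∑ a, f a b c := Finset.sum_congr rfl fun _ _ => Finset.sum_comm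
    _ = ∑ c, ∑ b, ∑ a, f a b c := Finset.sum_comm

lemma rot3 (f : α → β → γ → ℝ) :
    ∑ a, ∑ b, ∑ c, f a b c = ∑ c, ∑ a, ∑ b, f a b c := by
  calc ∑ a, ∑ b, ∑ c, f a b c = ∑ a, ∑ c, ∑ b, f a b c :=
        Finset.sum_congr rfl fun _ _ => Finset.sum_comm
    _ = ∑ c, ∑ a, ∑ b, f a b c := Finset.sum_comm

lemma rot3' (f : α → β → γ → ℝ) :
    ∑ a, ∑ b, ∑ c, f a b c = ∑ b, ∑ c, ∑ a, f a b c := by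
  calc ∑ a, ∑ b, ∑ c, f a b c = ∑ b, ∑ a, ∑ c, f a b c := Finset.sum_comm
    _ = ∑ b, ∑ c, ∑ a, f a b c := Finset.sum_congr rfl fun _ _ => Finset.sum_comm

lemma swap14 (f : α → β → γ → δ → ℝ) :
    ∑ a, ∑ b, ∑ c, ∑ d, f a b c d = ∑ d, ∑ b, ∑ c, ∑ a, f a b c d := by
  calc ∑ a, ∑ b, ∑ c, ∑ d, f a b c d
      = ∑ a, ∑ d, ∑ b, ∑ c, f a b c d :=
        Finset.sum_congr rfl fun a _ => rot3 (fun b c d => f a b c d)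
    _ = ∑ d, ∑ a, ∑ b, ∑ c, f a b c d := Finset.sum_comm
    _ = ∑ d, ∑ b, ∑ c, ∑ a, f a b c d :=
        Finset.sum_congr rfl fun d _ => rot3' (fun a b c => f a b c d)

end sums

/-! ### Mode products and inner product on third-order tensors -/

section tensors

variable {n1 n2 n3 : ℕ}

/-- Inner product of tensors. -/
def tin (X Y : Fin n1 → Fin n2 → Fin n3 → ℝ) : ℝ :=
  ∑ p, ∑ q, ∑ k, X p q k * Y p q k

/-- Mode-1 product with a matrix. -/
def c1 {m : ℕ} (U : Matrix (Fin m) (Fin n1) ℝ) (X : Fin n1 → Fin n2 → Fin n3 → ℝ) :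
    Fin m → Fin n2 → Fin n3 → ℝ := fun p q k => ∑ p', U p p' * X p' q k

/-- Mode-2 product with a matrix. -/
def c2 {m : ℕ} (U : Matrix (Fin m) (Fin n2) ℝ) (X : Fin n1 → Fin n2 → Fin n3 → ℝ) :
    Fin n1 → Fin m → Fin n3 → ℝ := fun p q k => ∑ q', U q q' * X p q' k

/-- Mode-3 product with a matrix. -/
def c3 {m : ℕ} (U : Matrix (Fin m) (Fin n3) ℝ) (X : Fin n1 → Fin n2 → Fin n3 → ℝ) :
    Fin n1 → Fin n2 → Fin m → ℝ := fun p q k => ∑ k', U k k' * X p q k'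

variable {m m' : ℕ}

lemma c1_one (X : Fin n1 → Fin n2 → Fin n3 → ℝ) : c1 1 X = X := by
  funext p q k; simp [c1, Matrix.one_apply]

lemma c2_one (X : Fin n1 → Fin n2 → Fin n3 → ℝ) : c2 1 X = X := by
  funext p q k; simp [c2, Matrix.one_apply]

lemma c3_one (X : Fin n1 → Fin n2 → Fin n3 → ℝ) : c3 1 X = X := by
  funext p q k; simp [c3, Matrix.one_apply]

lemma c1_mul (U : Matrix (Fin m) (Fin m') ℝ) (V : Matrix (Fin m') (Fin n1) ℝ)
    (X : Fin n1 → Fin n2 → Fin n3 → ℝ) : c1 (U * V) X = c1 U (c1 V X) := by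
  funext p q k
  simp only [c1, Matrix.mul_apply, Finset.sum_mul, Finset.mul_sum]
  rw [Finset.sum_comm]
  exact Finset.sum_congr rfl fun _ _ => Finset.sum_congr rfl fun _ _ => by ring

lemma c2_mul (U : Matrix (Fin m) (Fin m') ℝ) (V : Matrix (Fin m') (Fin n2) ℝ)
    (X : Fin n1 → Fin n2 → Fin n3 → ℝ) : c2 (U * V) X = c2 U (c2 V X) := by
  funext p q k
  simp only [c2, Matrix.mul_apply, Finset.sum_mul, Finset.mul_sum]
  rw [Finset.sum_comm]
  exact Finset.sum_congr rfl fun _ _ => Finset.sum_congr rfl fun _ _ => by ring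

lemma c3_mul (U : Matrix (Fin m) (Fin m') ℝ) (V : Matrix (Fin m') (Fin n3) ℝ)
    (X : Fin n1 → Fin n2 → Fin n3 → ℝ) : c3 (U * V) X = c3 U (c3 V X) := by
  funext p q k
  simp only [c3, Matrix.mul_apply, Finset.sum_mul, Finset.mul_sum]
  rw [Finset.sum_comm]
  exact Finset.sum_congr rfl fun _ _ => Finset.sum_congr rfl fun _ _ => by ring

lemma c1_c2 (U : Matrix (Fin m) (Fin n1) ℝ) (V : Matrix (Fin m') (Fin n2) ℝ)
    (X : Fin n1 → Fin n2 → Fin n3 → ℝ) : c1 U (c2 V X) = c2 V (c1 U X) := by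
  funext p q k
  simp only [c1, c2, Finset.mul_sum]
  rw [Finset.sum_comm]
  exact Finset.sum_congr rfl fun _ _ => Finset.sum_congr rfl fun _ _ => by ring

lemma c1_c3 (U : Matrix (Fin m) (Fin n1) ℝ) (V : Matrix (Fin m') (Fin n3) ℝ)
    (X : Fin n1 → Fin n2 → Fin n3 → ℝ) : c1 U (c3 V X) = c3 V (c1 U X) := by
  funext p q k
  simp only [c1, c3, Finset.mul_sum]
  rw [Finset.sum_comm]
  exact Finset.sum_congr rfl fun _ _ => Finset.sum_congr rfl fun _ _ => by ring

lemma c2_c3 (U : Matrix (Fin m) (Fin n2) ℝ) (V : Matrix (Fin m') (Fin n3) ℝ)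
    (X : Fin n1 → Fin n2 → Fin n3 → ℝ) : c2 U (c3 V X) = c3 V (c2 U X) := by
  funext p q k
  simp only [c2, c3, Finset.mul_sum]
  rw [Finset.sum_comm]
  exact Finset.sum_congr rfl fun _ _ => Finset.sum_congr rfl fun _ _ => by ring

lemma c1_sub (U : Matrix (Fin m) (Fin n1) ℝ) (X Y : Fin n1 → Fin n2 → Fin n3 → ℝ) :
    c1 U (X - Y) = c1 U X - c1 U Y := by
  funext p q k
  simp [c1, mul_sub, Finset.sum_sub_distrib]

lemma c2_sub (U : Matrix (Fin m) (Fin n2) ℝ) (X Y : Fin n1 → Fin n2 → Fin n3 → ℝ) :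
    c2 U (X - Y) = c2 U X - c2 U Y := by
  funext p q k
  simp [c2, mul_sub, Finset.sum_sub_distrib]

lemma c3_sub (U : Matrix (Fin m) (Fin n3) ℝ) (X Y : Fin n1 → Fin n2 → Fin n3 → ℝ) :
    c3 U (X - Y) = c3 U X - c3 U Y := by
  funext p q k
  simp [c3, mul_sub, Finset.sum_sub_distrib]

lemma c1_matsub (U V : Matrix (Fin m) (Fin n1) ℝ) (X : Fin n1 → Fin n2 → Fin n3 → ℝ) :
    c1 (U - V) X = c1 U X - c1 V X := by
  funext p q k
  simp [c1, sub_mul, Finset.sum_sub_distrib]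

lemma c2_matsub (U V : Matrix (Fin m) (Fin n2) ℝ) (X : Fin n1 → Fin n2 → Fin n3 → ℝ) :
    c2 (U - V) X = c2 U X - c2 V X := by
  funext p q k
  simp [c2, sub_mul, Finset.sum_sub_distrib]

lemma c3_matsub (U V : Matrix (Fin m) (Fin n3) ℝ) (X : Fin n1 → Fin n2 → Fin n3 → ℝ) :
    c3 (U - V) X = c3 U X - c3 V X := by
  funext p q k
  simp [c3, sub_mul, Finset.sum_sub_distrib]

lemma tin_comm (X Y : Fin n1 → Fin n2 → Fin n3 → ℝ) : tin X Y = tin Y X := by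
  unfold tin
  exact Finset.sum_congr rfl fun _ _ => Finset.sum_congr rfl fun _ _ =>
    Finset.sum_congr rfl fun _ _ => mul_comm _ _

lemma tin_add_right (X Y Z : Fin n1 → Fin n2 → Fin n3 → ℝ) :
    tin X (Y + Z) = tin X Y + tin X Z := by
  simp [tin, mul_add, Finset.sum_add_distrib]

lemma tin_sub_right (X Y Z : Fin n1 → Fin n2 → Fin n3 → ℝ) :
    tin X (Y - Z) = tin X Y - tin X Z := by
  simp [tin, mul_sub, Finset.sum_sub_distrib]

lemma tin_self_nonneg (X : Fin n1 → Fin n2 → Fin n3 → ℝ) : 0 ≤ tin X X := by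
  refine Finset.sum_nonneg fun _ _ => Finset.sum_nonneg fun _ _ =>
    Finset.sum_nonneg fun _ _ => mul_self_nonneg _

lemma tin_c1 (P : Matrix (Fin n1) (Fin n1) ℝ) (X Y : Fin n1 → Fin n2 → Fin n3 → ℝ) :
    tin (c1 P X) Y = tin X (c1 Pᵀ Y) := by
  simp only [tin, c1, Matrix.transpose_apply, Finset.sum_mul, Finset.mul_sum]
  rw [swap14]
  exact Finset.sum_congr rfl fun _ _ => Finset.sum_congr rfl fun _ _ =>
    Finset.sum_congr rfl fun _ _ => Finset.sum_congr rfl fun _ _ => by ring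

lemma tin_c2 (P : Matrix (Fin n2) (Fin n2) ℝ) (X Y : Fin n1 → Fin n2 → Fin n3 → ℝ) :
    tin (c2 P X) Y = tin X (c2 Pᵀ Y) := by
  simp only [tin, c2, Matrix.transpose_apply, Finset.sum_mul, Finset.mul_sum]
  refine Finset.sum_congr rfl fun p _ => ?_
  rw [swap13]
  exact Finset.sum_congr rfl fun _ _ => Finset.sum_congr rfl fun _ _ =>
    Finset.sum_congr rfl fun _ _ => by ring

lemma tin_c3 (P : Matrix (Fin n3) (Fin n3) ℝ) (X Y : Fin n1 → Fin n2 → Fin n3 → ℝ) :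
    tin (c3 P X) Y = tin X (c3 Pᵀ Y) := by
  simp only [tin, c3, Matrix.transpose_apply, Finset.sum_mul, Finset.mul_sum]
  refine Finset.sum_congr rfl fun p _ => Finset.sum_congr rfl fun q _ => ?_
  rw [Finset.sum_comm]
  exact Finset.sum_congr rfl fun _ _ => Finset.sum_congr rfl fun _ _ => by ring

/-- Contraction along mode 1 by an orthogonal projection decreases the norm. -/
lemma tin_c1_le (P : Matrix (Fin n1) (Fin n1) ℝ) (hPt : Pᵀ = P) (hPP : P * P = P)
    (X : Fin n1 → Fin n2 → Fin n3 → ℝ) : tin (c1 P X) (c1 P X) ≤ tin X X := by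
  have key : ∀ R : Matrix (Fin n1) (Fin n1) ℝ, Rᵀ = R → R * R = R →
      tin (c1 R X) (c1 R X) = tin X (c1 R X) := by
    intro R hRt hRR
    rw [tin_c1, hRt, ← c1_mul, hRR]
  have h1 := key P hPt hPP
  have hQt : (1 - P)ᵀ = 1 - P := by
    rw [Matrix.transpose_sub, Matrix.transpose_one, hPt]
  have hQQ : (1 - P) * (1 - P) = 1 - P := by
    rw [sub_mul, one_mul, mul_sub, mul_one, hPP, sub_self, sub_zero]
  have h2 := key (1 - P) hQt hQQ
  have h3 : tin X (c1 (1 - P) X) = tin X X - tin X (c1 P X) := by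
    rw [c1_matsub, c1_one, tin_sub_right]
  have h4 : 0 ≤ tin X X - tin X (c1 P X) := by
    rw [← h3, ← h2]; exact tin_self_nonneg _
  linarith [h1, h4]

lemma tin_c2_le (P : Matrix (Fin n2) (Fin n2) ℝ) (hPt : Pᵀ = P) (hPP : P * P = P)
    (X : Fin n1 → Fin n2 → Fin n3 → ℝ) : tin (c2 P X) (c2 P X) ≤ tin X X := by
  have key : ∀ R : Matrix (Fin n2) (Fin n2) ℝ, Rᵀ = R → R * R = R →
      tin (c2 R X) (c2 R X) = tin X (c2 R X) := by
    intro R hRt hRR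
    rw [tin_c2, hRt, ← c2_mul, hRR]
  have h1 := key P hPt hPP
  have hQt : (1 - P)ᵀ = 1 - P := by
    rw [Matrix.transpose_sub, Matrix.transpose_one, hPt]
  have hQQ : (1 - P) * (1 - P) = 1 - P := by
    rw [sub_mul, one_mul, mul_sub, mul_one, hPP, sub_self, sub_zero]
  have h2 := key (1 - P) hQt hQQ
  have h3 : tin X (c2 (1 - P) X) = tin X X - tin X (c2 P X) := by
    rw [c2_matsub, c2_one, tin_sub_right]
  have h4 : 0 ≤ tin X X - tin X (c2 P X) := by
    rw [← h3, ← h2]; exact tin_self_nonneg _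
  linarith [h1, h4]

end tensors

/-! ### Choice of projection for one mode -/

lemma exists_proj {n : ℕ} {ι : Type*} [Fintype ι] (E : Matrix (Fin n) ι ℝ)
    (r1 : ℕ) (h : r1 ≤ n) :
    ∃ W : Matrix (Fin n) (Fin r1) ℝ, Wᵀ * W = 1 ∧
      (∑ p, ∑ j, ((E - W * Wᵀ * E) p j) ^ 2) =
        ∑ r ∈ Finset.univ.filter (fun r : Fin n => r1 ≤ (r : ℕ)), sval E r ^ 2 := by
  classical
  have hM : (E * Eᴴ).IsHermitian := Matrix.isHermitian_mul_conjTranspose_self E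
  set M : Matrix (Fin n) (Fin n) ℝ := E * Eᴴ with hMdef
  set V : Matrix (Fin n) (Fin n) ℝ := (hM.eigenvectorUnitary : Matrix (Fin n) (Fin n) ℝ)
    with hVdef
  set lam : Fin n → ℝ := hM.eigenvalues with hlam
  set π : Equiv.Perm (Fin n) := (Fin.revPerm).trans (Tuple.sort lam) with hπ
  -- orthonormal columns of V
  have hVV : star V * V = 1 := (Unitary.mem_iff.mp hM.eigenvectorUnitary.2).1
  have hVorth : ∀ i j, (∑ p, V p i * V p j) = if i = j then (1 : ℝ) else 0 := by
    intro i j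
    have h0 := congrFun (congrFun hVV i) j
    simpa [Matrix.mul_apply, Matrix.star_apply, Matrix.one_apply] using h0
  -- diagonalization, entrywise
  have hST : star V * M * V = Matrix.diagonal (RCLike.ofReal ∘ lam) := by
    have := hM.conjStarAlgAut_star_eigenvectorUnitary
    rwa [Unitary.conjStarAlgAut_star_apply] at this
  have hkey : ∀ i j, (∑ q, (∑ p, V p i * M p q) * V q j)
      = if i = j then lam i else 0 := by
    intro i j
    have h0 := congrFun (congrFun hST i) j
    simpa [Matrix.mul_apply, Matrix.star_apply, Matrix.diagonal_apply,
      RCLike.ofReal_real_eq_id, Finset.sum_mul] using h0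
  -- the matrix of selected eigenvectors
  set W : Matrix (Fin n) (Fin r1) ℝ :=
    Matrix.of (fun p a => V p (π (Fin.castLE h a))) with hWdef
  have hW1 : Wᵀ * W = 1 := by
    ext a b
    have hor := hVorth (π (Fin.castLE h a)) (π (Fin.castLE h b))
    have hent : (Wᵀ * W) a b = ∑ p, V p (π (Fin.castLE h a)) * V p (π (Fin.castLE h b)) := by
      simp [Matrix.mul_apply, hWdef]
    rw [hent, hor, Matrix.one_apply]
    by_cases hab : a = b
    · simp [hab]
    · have hne : π (Fin.castLE h a) ≠ π (Fin.castLE h b) := fun hc =>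
        hab (Fin.castLE_injective h (π.injective hc))
      simp [hab, hne]
  refine ⟨W, hW1, ?_⟩
  set P : Matrix (Fin n) (Fin n) ℝ := W * Wᵀ with hPdef
  have hPt : Pᵀ = P := by rw [hPdef, Matrix.transpose_mul, Matrix.transpose_transpose]
  have hPP : P * P = P := by
    rw [hPdef, Matrix.mul_assoc, ← Matrix.mul_assoc Wᵀ W Wᵀ, hW1, Matrix.one_mul]
  set Q : Matrix (Fin n) (Fin n) ℝ := 1 - P with hQdef
  have hQt : Qᵀ = Q := by rw [hQdef, Matrix.transpose_sub, Matrix.transpose_one, hPt]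
  have hQQ : Q * Q = Q := by
    rw [hQdef, sub_mul, one_mul, mul_sub, mul_one, hPP, sub_self, sub_zero]
  have hEQ : E - W * Wᵀ * E = Q * E := by rw [hQdef, Matrix.sub_mul, Matrix.one_mul, hPdef]
  -- Frobenius norm of Q*E as a trace
  have hfrob : (∑ p, ∑ j, ((Q * E) p j) ^ 2) = Matrix.trace (Q * E * (Q * E)ᵀ) := by
    rw [Matrix.trace]
    refine Finset.sum_congr rfl fun p _ => ?_
    rw [Matrix.diag_apply, Matrix.mul_apply]
    refine Finset.sum_congr rfl fun j _ => ?_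
    rw [Matrix.transpose_apply, pow_two]
  have hEt : Eᴴ = Eᵀ := by
    ext i j; simp [Matrix.conjTranspose_apply, Matrix.transpose_apply]
  have htr1 : Q * E * (Q * E)ᵀ = Q * M * Q := by
    rw [Matrix.transpose_mul, hQt, hMdef, hEt]
    simp only [Matrix.mul_assoc]
  have htr2 : Matrix.trace (Q * M * Q) = Matrix.trace (Q * M) := by
    rw [Matrix.trace_mul_cycle, hQQ]
  have htr3 : Matrix.trace (Q * M) = Matrix.trace M - Matrix.trace (P * M) := by
    rw [hQdef, Matrix.sub_mul, Matrix.one_mul, Matrix.trace_sub]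
  -- trace of P * M
  have htrP : Matrix.trace (P * M) = ∑ a : Fin r1, lam (π (Fin.castLE h a)) := by
    have hcyc : Matrix.trace (P * M) = Matrix.trace (Wᵀ * M * W) := by
      rw [hPdef, Matrix.mul_assoc, Matrix.trace_mul_comm]
    rw [hcyc]
    rw [Matrix.trace]
    refine Finset.sum_congr rfl fun a _ => ?_
    have := hkey (π (Fin.castLE h a)) (π (Fin.castLE h a))
    simp only [if_pos rfl] at this
    simpa [Matrix.diag, Matrix.mul_apply, hWdef, Matrix.of_apply, Finset.sum_mul] using this
  -- trace of M
  have htrM : Matrix.trace M = ∑ i, lam i := by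
    have hVV' : star (hM.eigenvectorUnitary : Matrix (Fin n) (Fin n) ℝ) *
        (hM.eigenvectorUnitary : Matrix (Fin n) (Fin n) ℝ) = 1 :=
      (Unitary.mem_iff.mp hM.eigenvectorUnitary.2).1
    conv_lhs => rw [hM.spectral_theorem, Unitary.conjStarAlgAut_apply]
    rw [Matrix.trace_mul_cycle, hVV', Matrix.one_mul, Matrix.trace_diagonal]
    rfl
  -- reindex the full sum of eigenvalues by π
  have hreindex : ∑ i, lam i = ∑ r : Fin n, lam (π r) := (Equiv.sum_comp π lam).symm
  -- the selected part equals the sum over small indices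
  have himg : (Finset.univ.filter (fun r : Fin n => ¬ r1 ≤ (r : ℕ))) =
      Finset.univ.image (Fin.castLE h) := by
    ext r
    simp only [Finset.mem_filter, Finset.mem_univ, true_and, Finset.mem_image, not_le]
    constructor
    · intro hr; exact ⟨⟨r, hr⟩, by ext; simp⟩
    · rintro ⟨a, rfl⟩; exact a.isLt
  have hsel : ∑ r ∈ Finset.univ.filter (fun r : Fin n => ¬ r1 ≤ (r : ℕ)), lam (π r)
      = ∑ a : Fin r1, lam (π (Fin.castLE h a)) := by
    rw [himg, Finset.sum_image (fun a _ b _ hab => Fin.castLE_injective h hab)]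
  -- eigenvalues are nonnegative, so sval squared is the eigenvalue
  have hsval : ∀ r : Fin n, sval E r ^ 2 = lam (π r) := by
    intro r
    have hnn : 0 ≤ lam (π r) := Matrix.eigenvalues_self_mul_conjTranspose_nonneg E _
    rw [sval]
    simp only [Function.comp_apply]
    rw [Real.sq_sqrt]
    · rfl
    · exact hnn
  calc (∑ p, ∑ j, ((E - W * Wᵀ * E) p j) ^ 2)
      = Matrix.trace (Q * M) := by rw [hEQ, hfrob, htr1, htr2]
    _ = (∑ r : Fin n, lam (π r)) - ∑ a : Fin r1, lam (π (Fin.castLE h a)) := by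
        rw [htr3, htrP, htrM, hreindex]
    _ = ∑ r ∈ Finset.univ.filter (fun r : Fin n => r1 ≤ (r : ℕ)), lam (π r) := by
        rw [← Finset.sum_filter_add_sum_filter_not Finset.univ
          (fun r : Fin n => r1 ≤ (r : ℕ)) (fun r => lam (π r)), hsel]
        ring
    _ = ∑ r ∈ Finset.univ.filter (fun r : Fin n => r1 ≤ (r : ℕ)), sval E r ^ 2 :=
        Finset.sum_congr rfl fun r _ => (hsval r).symm

/-! ### Main theorem -/

/-- **Tucker approximation (Lemma 1).**  For any real third-order tensor
`A ∈ ℝ^{n1×n2×n3}` and ranks `r1 ≤ n1`, `r2 ≤ n2`, `r3 ≤ n3`, there is a Tucker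
decomposition whose squared Frobenius error is bounded by the tail sums of squared
singular values of the three unfoldings.  (Indices are 0-based: the 1-indexed range
`r = rᵢ+1, …, nᵢ` corresponds to `rᵢ ≤ r` for `r : Fin nᵢ`.) -/
theorem tucker_approximation {n1 n2 n3 : ℕ} (r1 r2 r3 : ℕ)
    (h1 : r1 ≤ n1) (h2 : r2 ≤ n2) (h3 : r3 ≤ n3)
    (A : Fin n1 → Fin n2 → Fin n3 → ℝ) :
    ∃ (G : Fin r1 → Fin r2 → Fin r3 → ℝ)
      (U1 : Matrix (Fin n1) (Fin r1) ℝ) (U2 : Matrix (Fin n2) (Fin r2) ℝ)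
      (U3 : Matrix (Fin n3) (Fin r3) ℝ),
      frob3 (fun p q k => A p q k - tucker G U1 U2 U3 p q k) ^ 2 ≤
        (∑ r ∈ Finset.univ.filter (fun r : Fin n1 => r1 ≤ (r : ℕ)),
            sval (unfold1 A) r ^ 2) +
        (∑ r ∈ Finset.univ.filter (fun r : Fin n2 => r2 ≤ (r : ℕ)),
            sval (unfold2 A) r ^ 2) +
        (∑ r ∈ Finset.univ.filter (fun r : Fin n3 => r3 ≤ (r : ℕ)),
            sval (unfold3 A) r ^ 2) := by
  classical
  obtain ⟨W1, hW1, hN1⟩ := exists_proj (unfold1 A) r1 h1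
  obtain ⟨W2, hW2, hN2⟩ := exists_proj (unfold2 A) r2 h2
  obtain ⟨W3, hW3, hN3⟩ := exists_proj (unfold3 A) r3 h3
  set P1 : Matrix (Fin n1) (Fin n1) ℝ := W1 * W1ᵀ with hP1def
  set P2 : Matrix (Fin n2) (Fin n2) ℝ := W2 * W2ᵀ with hP2def
  set P3 : Matrix (Fin n3) (Fin n3) ℝ := W3 * W3ᵀ with hP3def
  have hP1t : P1ᵀ = P1 := by rw [hP1def, Matrix.transpose_mul, Matrix.transpose_transpose]
  have hP2t : P2ᵀ = P2 := by rw [hP2def, Matrix.transpose_mul, Matrix.transpose_transpose]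
  have hP3t : P3ᵀ = P3 := by rw [hP3def, Matrix.transpose_mul, Matrix.transpose_transpose]
  have hP1P : P1 * P1 = P1 := by
    rw [hP1def, Matrix.mul_assoc, ← Matrix.mul_assoc W1ᵀ W1 W1ᵀ, hW1, Matrix.one_mul]
  have hP2P : P2 * P2 = P2 := by
    rw [hP2def, Matrix.mul_assoc, ← Matrix.mul_assoc W2ᵀ W2 W2ᵀ, hW2, Matrix.one_mul]
  have hP3P : P3 * P3 = P3 := by
    rw [hP3def, Matrix.mul_assoc, ← Matrix.mul_assoc W3ᵀ W3 W3ᵀ, hW3, Matrix.one_mul]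
  set G : Fin r1 → Fin r2 → Fin r3 → ℝ := c1 W1ᵀ (c2 W2ᵀ (c3 W3ᵀ A)) with hGdef
  refine ⟨G, W1, W2, W3, ?_⟩
  -- tucker product equals the triple projection
  have htuck : tucker G W1 W2 W3 = c1 P1 (c2 P2 (c3 P3 A)) := by
    have h0 : tucker G W1 W2 W3 = c1 W1 (c2 W2 (c3 W3 G)) := by
      funext p q k
      simp only [tucker, c1, c2, c3, Finset.mul_sum]
      refine Finset.sum_congr rfl fun a _ => Finset.sum_congr rfl fun b _ =>
        Finset.sum_congr rfl fun c _ => by ring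
    rw [h0, hGdef]
    rw [show c3 W3 (c1 W1ᵀ (c2 W2ᵀ (c3 W3ᵀ A)))
        = c1 W1ᵀ (c2 W2ᵀ (c3 W3 (c3 W3ᵀ A))) by rw [← c1_c3, ← c2_c3]]
    rw [show c2 W2 (c1 W1ᵀ (c2 W2ᵀ (c3 W3 (c3 W3ᵀ A))))
        = c1 W1ᵀ (c2 W2 (c2 W2ᵀ (c3 W3 (c3 W3ᵀ A)))) by rw [← c1_c2]]
    rw [← c1_mul, ← c2_mul, ← c3_mul, ← hP1def, ← hP2def, ← hP3def]
  -- error decomposition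
  set Q1 : Matrix (Fin n1) (Fin n1) ℝ := 1 - P1 with hQ1def
  set Q2 : Matrix (Fin n2) (Fin n2) ℝ := 1 - P2 with hQ2def
  set Q3 : Matrix (Fin n3) (Fin n3) ℝ := 1 - P3 with hQ3def
  set T1 := c1 Q1 A with hT1def
  set T2 := c1 P1 (c2 Q2 A) with hT2def
  set T3 := c1 P1 (c2 P2 (c3 Q3 A)) with hT3def
  have hD : (fun p q k => A p q k - tucker G W1 W2 W3 p q k) = T1 + (T2 + T3) := by
    have e1 : T1 = A - c1 P1 A := by
      rw [hT1def, hQ1def, c1_matsub, c1_one]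
    have e2 : T2 = c1 P1 A - c1 P1 (c2 P2 A) := by
      rw [hT2def, hQ2def, c2_matsub, c2_one, c1_sub]
    have e3 : T3 = c1 P1 (c2 P2 A) - c1 P1 (c2 P2 (c3 P3 A)) := by
      rw [hT3def, hQ3def, c3_matsub, c3_one, c2_sub, c1_sub]
    have : T1 + (T2 + T3) = A - c1 P1 (c2 P2 (c3 P3 A)) := by
      rw [e1, e2, e3]; abel
    rw [this, htuck]
    rfl
  -- orthogonality
  have hQ1t : Q1ᵀ = Q1 := by rw [hQ1def, Matrix.transpose_sub, Matrix.transpose_one, hP1t]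
  have hQ2t : Q2ᵀ = Q2 := by rw [hQ2def, Matrix.transpose_sub, Matrix.transpose_one, hP2t]
  have hQ3t : Q3ᵀ = Q3 := by rw [hQ3def, Matrix.transpose_sub, Matrix.transpose_one, hP3t]
  have hQ1P1 : Q1 * P1 = 0 := by rw [hQ1def, sub_mul, one_mul, hP1P, sub_self]
  have hQ2P2 : Q2 * P2 = 0 := by rw [hQ2def, sub_mul, one_mul, hP2P, sub_self]
  have hc1zero : ∀ X : Fin n1 → Fin n2 → Fin n3 → ℝ, c1 (0 : Matrix (Fin n1) (Fin n1) ℝ) X = 0 := by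
    intro X; funext p q k; simp [c1]
  have hc2zero : ∀ X : Fin n1 → Fin n2 → Fin n3 → ℝ, c2 (0 : Matrix (Fin n2) (Fin n2) ℝ) X = 0 := by
    intro X; funext p q k; simp [c2]
  have htin_zero : ∀ X : Fin n1 → Fin n2 → Fin n3 → ℝ,
      tin X (0 : Fin n1 → Fin n2 → Fin n3 → ℝ) = 0 := by
    intro X; simp [tin]
  have h12 : tin T1 T2 = 0 := by
    rw [hT1def, hT2def, tin_c1, hQ1t, ← c1_mul, hQ1P1, hc1zero, htin_zero]
  have h13 : tin T1 T3 = 0 := by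
    rw [hT1def, hT3def, tin_c1, hQ1t, ← c1_mul, hQ1P1, hc1zero, htin_zero]
  have h23 : tin T2 T3 = 0 := by
    rw [hT2def, hT3def, tin_c1, hP1t, ← c1_mul, hP1P]
    rw [c1_c2 P1 P2 (c3 Q3 A)]
    rw [tin_c2, hQ2t, ← c2_mul, hQ2P2, hc2zero, htin_zero]
  -- expand the squared norm
  have hsq : frob3 (fun p q k => A p q k - tucker G W1 W2 W3 p q k) ^ 2
      = tin T1 T1 + tin T2 T2 + tin T3 T3 := by
    have hnn : (0:ℝ) ≤ ∑ p, ∑ q, ∑ k,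
        ((fun p q k => A p q k - tucker G W1 W2 W3 p q k) p q k) ^ 2 := by
      refine Finset.sum_nonneg fun _ _ => Finset.sum_nonneg fun _ _ =>
        Finset.sum_nonneg fun _ _ => sq_nonneg _
    have e0 : frob3 (fun p q k => A p q k - tucker G W1 W2 W3 p q k) ^ 2
        = tin (T1 + (T2 + T3)) (T1 + (T2 + T3)) := by
      rw [frob3, Real.sq_sqrt hnn, ← hD]
      simp [tin, sq]
    rw [e0]
    rw [tin_add_right, tin_add_right]
    rw [tin_comm (T1 + (T2 + T3)) T1, tin_add_right, tin_add_right]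
    rw [tin_comm (T1 + (T2 + T3)) T2, tin_add_right, tin_add_right]
    rw [tin_comm (T1 + (T2 + T3)) T3, tin_add_right, tin_add_right]
    rw [tin_comm T2 T1, tin_comm T3 T1, tin_comm T3 T2]
    rw [h12, h13, h23]
    ring
  rw [hsq]
  -- identify / bound the three terms
  have key1 : tin T1 T1 =
      ∑ r ∈ Finset.univ.filter (fun r : Fin n1 => r1 ≤ (r : ℕ)), sval (unfold1 A) r ^ 2 := by
    rw [← hN1]
    have hEQ : ∀ p (j : Fin n2 × Fin n3),
        (unfold1 A - W1 * W1ᵀ * unfold1 A) p j = T1 p j.1 j.2 := by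
      intro p j
      simp [hT1def, hQ1def, c1, unfold1, Matrix.sub_apply, Matrix.mul_apply,
        Matrix.one_apply, sub_mul, Finset.sum_sub_distrib, ← hP1def]
    rw [tin]
    refine (Finset.sum_congr rfl fun p _ => ?_).symm
    rw [Fintype.sum_prod_type]
    exact Finset.sum_congr rfl fun q _ => Finset.sum_congr rfl fun k _ => by
      rw [hEQ p (q, k)]; ring
  have key2 : tin (c2 Q2 A) (c2 Q2 A) =
      ∑ r ∈ Finset.univ.filter (fun r : Fin n2 => r2 ≤ (r : ℕ)), sval (unfold2 A) r ^ 2 := by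
    rw [← hN2]
    have hEQ : ∀ q (j : Fin n1 × Fin n3),
        (unfold2 A - W2 * W2ᵀ * unfold2 A) q j = (c2 Q2 A) j.1 q j.2 := by
      intro q j
      simp [hQ2def, c2, unfold2, Matrix.sub_apply, Matrix.mul_apply,
        Matrix.one_apply, sub_mul, Finset.sum_sub_distrib, ← hP2def]
    rw [tin, Finset.sum_comm]
    refine (Finset.sum_congr rfl fun q _ => ?_).symm
    rw [Fintype.sum_prod_type]
    exact Finset.sum_congr rfl fun p _ => Finset.sum_congr rfl fun k _ => by
      rw [hEQ q (p, k)]; ring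
  have key3 : tin (c3 Q3 A) (c3 Q3 A) =
      ∑ r ∈ Finset.univ.filter (fun r : Fin n3 => r3 ≤ (r : ℕ)), sval (unfold3 A) r ^ 2 := by
    rw [← hN3]
    have hEQ : ∀ k (j : Fin n1 × Fin n2),
        (unfold3 A - W3 * W3ᵀ * unfold3 A) k j = (c3 Q3 A) j.1 j.2 k := by
      intro k j
      simp [hQ3def, c3, unfold3, Matrix.sub_apply, Matrix.mul_apply,
        Matrix.one_apply, sub_mul, Finset.sum_sub_distrib, ← hP3def]
    have hswap : tin (c3 Q3 A) (c3 Q3 A)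
        = ∑ k, ∑ p, ∑ q, (c3 Q3 A) p q k * (c3 Q3 A) p q k := by
      rw [tin]
      calc ∑ p, ∑ q, ∑ k, (c3 Q3 A) p q k * (c3 Q3 A) p q k
          = ∑ p, ∑ k, ∑ q, (c3 Q3 A) p q k * (c3 Q3 A) p q k :=
            Finset.sum_congr rfl fun _ _ => Finset.sum_comm
        _ = ∑ k, ∑ p, ∑ q, (c3 Q3 A) p q k * (c3 Q3 A) p q k := Finset.sum_comm
    rw [hswap]
    refine (Finset.sum_congr rfl fun k _ => ?_).symm
    rw [Fintype.sum_prod_type]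
    exact Finset.sum_congr rfl fun p _ => Finset.sum_congr rfl fun q _ => by
      rw [hEQ k (p, q)]; ring
  have b2 : tin T2 T2 ≤ tin (c2 Q2 A) (c2 Q2 A) := by
    rw [hT2def]; exact tin_c1_le P1 hP1t hP1P _
  have b3 : tin T3 T3 ≤ tin (c3 Q3 A) (c3 Q3 A) := by
    have step1 : tin T3 T3 ≤ tin (c2 P2 (c3 Q3 A)) (c2 P2 (c3 Q3 A)) := by
      rw [hT3def]; exact tin_c1_le P1 hP1t hP1P _
    have step2 : tin (c2 P2 (c3 Q3 A)) (c2 P2 (c3 Q3 A)) ≤ tin (c3 Q3 A) (c3 Q3 A) :=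
      tin_c2_le P2 hP2t hP2P _
    linarith
  rw [key1]
  have := key2 ▸ b2
  have := key3 ▸ b3
  linarith
end
end

section
/- Suppose each basis function b_k : ℝ → ℝ (k = 1,…,n_d) satisfies |b_k(t)| ≤ B for all t ∈ ℝ, where B > 0. Then for every z ∈ ℝ^n and all parameter tensors A, A' ∈ ℝ^{n×m×n_d}, the KAN layer outputs satisfy ‖Φ(z;A) − Φ(z;A')‖₂ ≤ B √(n · n_d) · ‖A − A'‖_F. -/
noncomputable section
open Finset

/-- Euclidean norm of a finitely-indexed real vector. -/
def enorm {ι : Type*} [Fintype ι] (x : ι → ℝ) : ℝ :=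
  Real.sqrt (∑ i, x i ^ 2)

/-- A KAN layer: `Φ(z;A)_q = Σ_p Σ_k A_{p,q,k} b_k(z_p)`. -/
def kanLayer {n m nd : ℕ} (b : Fin nd → ℝ → ℝ) (A : Fin n → Fin m → Fin nd → ℝ)
    (z : Fin n → ℝ) : Fin m → ℝ :=
  fun q => ∑ p, ∑ k, A p q k * b k (z p)

/-- If every basis function is bounded by `B > 0`, then for fixed input `z` a KAN
layer is `B √(n n_d)`-Lipschitz in its parameter tensor (Frobenius norm). -/
theorem kanLayer_param_lipschitz {n m nd : ℕ} (b : Fin nd → ℝ → ℝ) (B : ℝ) (hB : 0 < B)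
    (hbound : ∀ (k : Fin nd) (t : ℝ), |b k t| ≤ B)
    (z : Fin n → ℝ) (A A' : Fin n → Fin m → Fin nd → ℝ) :
    _root_.enorm (fun q => kanLayer b A z q - kanLayer b A' z q) ≤
      B * Real.sqrt ((n : ℝ) * (nd : ℝ)) * frob3 (fun p q k => A p q k - A' p q k) := by
  set D : Fin n → Fin m → Fin nd → ℝ := fun p q k => A p q k - A' p q k with hD
  set F : ℝ := ∑ p, ∑ q, ∑ k, D p q k ^ 2 with hF
  have hFnn : 0 ≤ F := by positivity
  have key : ∑ q, (kanLayer b A z q - kanLayer b A' z q) ^ 2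
      ≤ B ^ 2 * ((n : ℝ) * (nd : ℝ)) * F := by
    have hq : ∀ q : Fin m, (kanLayer b A z q - kanLayer b A' z q) ^ 2
        ≤ B ^ 2 * ((n : ℝ) * (nd : ℝ)) * ∑ p, ∑ k, D p q k ^ 2 := by
      intro q
      have h1 : kanLayer b A z q - kanLayer b A' z q
          = ∑ p, ∑ k, D p q k * b k (z p) := by
        simp [kanLayer, hD, sub_mul, Finset.sum_sub_distrib]
      rw [h1, ← Finset.sum_product']
      have h2 := sq_sum_le_card_mul_sum_sq
        (s := (Finset.univ : Finset (Fin n × Fin nd)))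
        (f := fun pk => D pk.1 q pk.2 * b pk.2 (z pk.1))
      refine h2.trans ?_
      have hcard : ((Finset.univ : Finset (Fin n × Fin nd)).card : ℝ)
          = (n : ℝ) * (nd : ℝ) := by simp
      rw [hcard]
      have h3 : ∑ pk : Fin n × Fin nd, (D pk.1 q pk.2 * b pk.2 (z pk.1)) ^ 2
          ≤ B ^ 2 * ∑ p, ∑ k, D p q k ^ 2 := by
        have hrw : B ^ 2 * ∑ p, ∑ k, D p q k ^ 2
            = ∑ pk : Fin n × Fin nd, B ^ 2 * D pk.1 q pk.2 ^ 2 := by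
          rw [Finset.mul_sum]; simp_rw [Finset.mul_sum]; rw [← Finset.sum_product']; rfl
        rw [hrw]
        refine Finset.sum_le_sum fun pk _ => ?_
        have hb := hbound pk.2 (z pk.1)
        have : (b pk.2 (z pk.1)) ^ 2 ≤ B ^ 2 := by
          rw [← sq_abs]; exact pow_le_pow_left₀ (abs_nonneg _) hb 2
        calc (D pk.1 q pk.2 * b pk.2 (z pk.1)) ^ 2
            = (b pk.2 (z pk.1)) ^ 2 * D pk.1 q pk.2 ^ 2 := by ring
          _ ≤ B ^ 2 * D pk.1 q pk.2 ^ 2 := by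
              exact mul_le_mul_of_nonneg_right this (by positivity)
      nlinarith [Finset.sum_nonneg (fun p (_ : p ∈ Finset.univ) =>
        Finset.sum_nonneg (fun k (_ : k ∈ Finset.univ) => sq_nonneg (D p q k)))]
    calc ∑ q, (kanLayer b A z q - kanLayer b A' z q) ^ 2
        ≤ ∑ q, B ^ 2 * ((n : ℝ) * (nd : ℝ)) * ∑ p, ∑ k, D p q k ^ 2 :=
          Finset.sum_le_sum fun q _ => hq q
      _ = B ^ 2 * ((n : ℝ) * (nd : ℝ)) * F := by
          rw [← Finset.mul_sum, hF, Finset.sum_comm]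
  have := Real.sqrt_le_sqrt key
  refine le_trans this ?_
  rw [show B ^ 2 * ((n : ℝ) * (nd : ℝ)) * F = (B ^ 2) * (((n : ℝ) * (nd : ℝ)) * F) by ring,
    Real.sqrt_mul (by positivity), Real.sqrt_sq hB.le,
    Real.sqrt_mul (by positivity)]
  simp [frob3, _root_.enorm, mul_assoc]
  exact le_rfl
end
end

section
/- Suppose each basis function b_k : ℝ → ℝ (k = 1,…,n_d) is Lipschitz continuous with constant K > 0, and let A ∈ ℝ^{n×m×n_d} be a parameter tensor with ‖A‖_F ≤ M. Then for all z, z' ∈ ℝ^n, the KAN layer outputs satisfy ‖Φ(z;A) − Φ(z';A)‖₂ ≤ M K √n_d · ‖z − z'‖₂. -/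
noncomputable section
open Finset

/-- If every basis function is `K`-Lipschitz with `K > 0` and `‖A‖_F ≤ M`, then a KAN
layer is `M K √n_d`-Lipschitz in its input. -/
theorem kanLayer_input_lipschitz {n m nd : ℕ} (b : Fin nd → ℝ → ℝ) (K : ℝ) (hK : 0 < K)
    (hlip : ∀ (k : Fin nd) (s t : ℝ), |b k s - b k t| ≤ K * |s - t|)
    (A : Fin n → Fin m → Fin nd → ℝ) (M : ℝ) (hM : frob3 A ≤ M)
    (z z' : Fin n → ℝ) :
    _root_.enorm (fun q => kanLayer b A z q - kanLayer b A z' q) ≤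
      M * K * Real.sqrt (nd : ℝ) * _root_.enorm (fun p => z p - z' p) := by
  have hM0 : 0 ≤ M := le_trans (Real.sqrt_nonneg _) hM
  set S : ℝ := ∑ p, (z p - z' p) ^ 2 with hS
  have hS0 : 0 ≤ S := Finset.sum_nonneg fun _ _ => sq_nonneg _
  have hF0 : 0 ≤ ∑ p, ∑ q, ∑ k, A p q k ^ 2 :=
    Finset.sum_nonneg fun _ _ => Finset.sum_nonneg fun _ _ =>
      Finset.sum_nonneg fun _ _ => sq_nonneg _
  -- T bound: sum over (p,k) of bdiff² ≤ K² * nd * S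
  have hT : (∑ x : Fin n × Fin nd, (b x.2 (z x.1) - b x.2 (z' x.1)) ^ 2)
      ≤ K ^ 2 * nd * S := by
    have : ∀ x : Fin n × Fin nd, (b x.2 (z x.1) - b x.2 (z' x.1)) ^ 2
        ≤ K ^ 2 * (z x.1 - z' x.1) ^ 2 := by
      intro x
      have h := hlip x.2 (z x.1) (z' x.1)
      calc (b x.2 (z x.1) - b x.2 (z' x.1)) ^ 2
          = |b x.2 (z x.1) - b x.2 (z' x.1)| ^ 2 := (sq_abs _).symm
        _ ≤ (K * |z x.1 - z' x.1|) ^ 2 := pow_le_pow_left₀ (abs_nonneg _) h 2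
        _ = K ^ 2 * (z x.1 - z' x.1) ^ 2 := by rw [mul_pow, sq_abs]
    calc (∑ x : Fin n × Fin nd, (b x.2 (z x.1) - b x.2 (z' x.1)) ^ 2)
        ≤ ∑ x : Fin n × Fin nd, K ^ 2 * (z x.1 - z' x.1) ^ 2 :=
          Finset.sum_le_sum fun x _ => this x
      _ = K ^ 2 * nd * S := by
          simp only [Fintype.sum_prod_type, Finset.sum_const, Finset.card_univ,
            Fintype.card_fin, nsmul_eq_mul, hS, Finset.mul_sum]
          exact Finset.sum_congr rfl fun p _ => by ring
  -- per-q Cauchy-Schwarz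
  have hq : ∀ q : Fin m, (kanLayer b A z q - kanLayer b A z' q) ^ 2
      ≤ (∑ x : Fin n × Fin nd, A x.1 q x.2 ^ 2) * (K ^ 2 * nd * S) := by
    intro q
    have hdiff : kanLayer b A z q - kanLayer b A z' q
        = ∑ x : Fin n × Fin nd, A x.1 q x.2 * (b x.2 (z x.1) - b x.2 (z' x.1)) := by
      simp [kanLayer, Fintype.sum_prod_type, ← Finset.sum_sub_distrib, mul_sub]
    rw [hdiff]
    calc (∑ x : Fin n × Fin nd, A x.1 q x.2 * (b x.2 (z x.1) - b x.2 (z' x.1))) ^ 2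
        ≤ (∑ x : Fin n × Fin nd, A x.1 q x.2 ^ 2)
          * (∑ x : Fin n × Fin nd, (b x.2 (z x.1) - b x.2 (z' x.1)) ^ 2) :=
          Finset.sum_mul_sq_le_sq_mul_sq Finset.univ _ _
      _ ≤ (∑ x : Fin n × Fin nd, A x.1 q x.2 ^ 2) * (K ^ 2 * nd * S) := by
          apply mul_le_mul_of_nonneg_left hT
          exact Finset.sum_nonneg fun _ _ => sq_nonneg _
  have hsum : (∑ q, (kanLayer b A z q - kanLayer b A z' q) ^ 2)
      ≤ (∑ p, ∑ q, ∑ k, A p q k ^ 2) * (K ^ 2 * nd * S) := by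
    calc (∑ q, (kanLayer b A z q - kanLayer b A z' q) ^ 2)
        ≤ ∑ q, (∑ x : Fin n × Fin nd, A x.1 q x.2 ^ 2) * (K ^ 2 * nd * S) :=
          Finset.sum_le_sum fun q _ => hq q
      _ = (∑ p, ∑ q, ∑ k, A p q k ^ 2) * (K ^ 2 * nd * S) := by
          rw [← Finset.sum_mul]
          congr 1
          rw [show (∑ q, ∑ x : Fin n × Fin nd, A x.1 q x.2 ^ 2)
            = ∑ q, ∑ p, ∑ k, A p q k ^ 2 from by
              exact Finset.sum_congr rfl fun q _ => by rw [Fintype.sum_prod_type],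
            Finset.sum_comm]
  have hfinal : (∑ q, (kanLayer b A z q - kanLayer b A z' q) ^ 2)
      ≤ (M * K * Real.sqrt (nd : ℝ) * Real.sqrt S) ^ 2 := by
    have hsq : (M * K * Real.sqrt (nd : ℝ) * Real.sqrt S) ^ 2
        = M ^ 2 * (K ^ 2 * nd * S) := by
      rw [mul_pow, mul_pow, mul_pow, Real.sq_sqrt (Nat.cast_nonneg nd), Real.sq_sqrt hS0]
      ring
    rw [hsq]
    refine hsum.trans (mul_le_mul_of_nonneg_right ?_ (by positivity))
    have := Real.sqrt_le_sqrt (le_of_eq (rfl : (∑ p, ∑ q, ∑ k, A p q k ^ 2) = _))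
    calc (∑ p, ∑ q, ∑ k, A p q k ^ 2) = (frob3 A) ^ 2 := by
          rw [frob3, Real.sq_sqrt hF0]
      _ ≤ M ^ 2 := by
          apply pow_le_pow_left₀ (Real.sqrt_nonneg _) hM
  have hrhs0 : 0 ≤ M * K * Real.sqrt (nd : ℝ) * Real.sqrt S := by positivity
  calc _root_.enorm (fun q => kanLayer b A z q - kanLayer b A z' q)
      = Real.sqrt (∑ q, (kanLayer b A z q - kanLayer b A z' q) ^ 2) := rfl
    _ ≤ Real.sqrt ((M * K * Real.sqrt (nd : ℝ) * Real.sqrt S) ^ 2) :=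
        Real.sqrt_le_sqrt hfinal
    _ = M * K * Real.sqrt (nd : ℝ) * Real.sqrt S := Real.sqrt_sq hrhs0
    _ = M * K * Real.sqrt (nd : ℝ) * _root_.enorm (fun p => z p - z' p) := by rw [_root_.enorm]
end
end

section
/- Suppose each basis function b_k : ℝ → ℝ (k = 1,…,n_d) satisfies |b_k(t)| ≤ B for all t ∈ ℝ and is Lipschitz with constant K > 0. Let A, A' ∈ ℝ^{n×m×n_d} be parameter tensors. Then for all z, z' ∈ ℝ^n, ‖Φ(z;A) − Φ(z';A')‖₂ ≤ B √(n · n_d) · ‖A − A'‖_F + ‖A'‖_F · K √n_d · ‖z − z'‖₂. -/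
noncomputable section
open Finset

/-- Euclidean norm of a finitely-indexed real vector. -/
def enorm2 {ι : Type*} [Fintype ι] (x : ι → ℝ) : ℝ :=
  Real.sqrt (∑ i, x i ^ 2)

lemma enorm2_add_le {ι : Type*} [Fintype ι] (f g : ι → ℝ) :
    enorm2 (fun i => f i + g i) ≤ enorm2 f + enorm2 g := by
  have h : ∀ x : ι → ℝ, enorm2 x = ‖(WithLp.toLp 2 x : EuclideanSpace ℝ ι)‖ := by
    intro x
    simp [EuclideanSpace.norm_eq, enorm2, Real.norm_eq_abs, sq_abs]
  rw [h, h, h]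
  exact norm_add_le _ _

lemma key {n m nd : ℕ} (C : Fin n → Fin m → Fin nd → ℝ) (d : Fin n → Fin nd → ℝ) :
    enorm2 (fun q => ∑ p, ∑ k, C p q k * d p k) ≤
      frob3 C * Real.sqrt (∑ p, ∑ k, d p k ^ 2) := by
  rw [enorm2, frob3, ← Real.sqrt_mul (by positivity)]
  apply Real.sqrt_le_sqrt
  calc ∑ q, (∑ p, ∑ k, C p q k * d p k) ^ 2
      ≤ ∑ q, (∑ p, ∑ k, C p q k ^ 2) * (∑ p, ∑ k, d p k ^ 2) := by
        refine Finset.sum_le_sum fun q _ => ?_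
        have := Finset.sum_mul_sq_le_sq_mul_sq Finset.univ
          (fun x : Fin n × Fin nd => C x.1 q x.2) (fun x : Fin n × Fin nd => d x.1 x.2)
        simpa [Fintype.sum_prod_type] using this
    _ = (∑ p, ∑ q, ∑ k, C p q k ^ 2) * (∑ p, ∑ k, d p k ^ 2) := by
        rw [← Finset.sum_mul, Finset.sum_comm]

/-- Combined perturbation bound for a KAN layer in both parameters and input:
`‖Φ(z;A) − Φ(z';A')‖₂ ≤ B √(n n_d) ‖A − A'‖_F + ‖A'‖_F K √n_d ‖z − z'‖₂`. -/
theorem kanLayer_perturbation {n m nd : ℕ} (b : Fin nd → ℝ → ℝ) (B K : ℝ)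
    (hB : 0 < B) (hK : 0 < K)
    (hbound : ∀ (k : Fin nd) (t : ℝ), |b k t| ≤ B)
    (hlip : ∀ (k : Fin nd) (s t : ℝ), |b k s - b k t| ≤ K * |s - t|)
    (A A' : Fin n → Fin m → Fin nd → ℝ) (z z' : Fin n → ℝ) :
    enorm2 (fun q => kanLayer b A z q - kanLayer b A' z' q) ≤
      B * Real.sqrt ((n : ℝ) * (nd : ℝ)) * frob3 (fun p q k => A p q k - A' p q k) +
        frob3 A' * K * Real.sqrt (nd : ℝ) * enorm2 (fun p => z p - z' p) := by
  have hsplit : (fun q => kanLayer b A z q - kanLayer b A' z' q) =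
      fun q => (∑ p, ∑ k, (A p q k - A' p q k) * b k (z p)) +
        (∑ p, ∑ k, A' p q k * (b k (z p) - b k (z' p))) := by
    funext q
    simp only [kanLayer, sub_mul, mul_sub, Finset.sum_add_distrib,
      Finset.sum_sub_distrib]
    ring
  rw [hsplit]
  refine (enorm2_add_le _ _).trans (add_le_add ?_ ?_)
  · refine (key _ _).trans ?_
    rw [mul_comm (B * _)]
    apply mul_le_mul_of_nonneg_left _ (Real.sqrt_nonneg _)
    have h1 : (∑ p : Fin n, ∑ k : Fin nd, b k (z p) ^ 2) ≤ (n : ℝ) * (nd : ℝ) * B ^ 2 := by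
      calc (∑ p : Fin n, ∑ k : Fin nd, b k (z p) ^ 2)
          ≤ ∑ p : Fin n, ∑ k : Fin nd, B ^ 2 := by
            refine Finset.sum_le_sum fun p _ => Finset.sum_le_sum fun k _ => ?_
            rw [← sq_abs]
            exact pow_le_pow_left₀ (abs_nonneg _) (hbound k _) 2
        _ = (n : ℝ) * (nd : ℝ) * B ^ 2 := by simp [mul_assoc]
    refine (Real.sqrt_le_sqrt h1).trans_eq ?_
    rw [Real.sqrt_mul (by positivity), Real.sqrt_sq hB.le, mul_comm]
  · refine (key _ _).trans ?_
    rw [mul_assoc (frob3 A'), mul_assoc (frob3 A')]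
    apply mul_le_mul_of_nonneg_left _ (Real.sqrt_nonneg _)
    have h1 : (∑ p : Fin n, ∑ k : Fin nd, (b k (z p) - b k (z' p)) ^ 2) ≤
        K ^ 2 * (nd : ℝ) * (∑ p, (z p - z' p) ^ 2) := by
      calc (∑ p : Fin n, ∑ k : Fin nd, (b k (z p) - b k (z' p)) ^ 2)
          ≤ ∑ p : Fin n, ∑ _k : Fin nd, K ^ 2 * (z p - z' p) ^ 2 := by
            refine Finset.sum_le_sum fun p _ => Finset.sum_le_sum fun k _ => ?_
            have := pow_le_pow_left₀ (abs_nonneg _) (hlip k (z p) (z' p)) 2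
            simpa [mul_pow, sq_abs] using this
        _ = K ^ 2 * (nd : ℝ) * (∑ p, (z p - z' p) ^ 2) := by
            rw [Finset.mul_sum]
            refine Finset.sum_congr rfl fun p _ => ?_
            simp only [Finset.sum_const, Finset.card_univ, Fintype.card_fin,
              nsmul_eq_mul]
            ring
    refine (Real.sqrt_le_sqrt h1).trans_eq ?_
    rw [Real.sqrt_mul (by positivity), Real.sqrt_mul (by positivity), Real.sqrt_sq hK.le, enorm2]
end
end

section
/- Let Ψ be an L-layer KAN with widths n_1,…,n_{L+1} and n_d basis functions, where each b_k is bounded by B > 0 and Lipschitz with constant K > 0. Let {A_{ℓ,tg}} and {A_{ℓ,pt}} be target and pre-trained parameter tensors with ‖A_{ℓ,tg}‖_F ≤ M and ‖A_{ℓ,pt}‖_F ≤ M for all ℓ, set E_ℓ = A_{ℓ,tg} − A_{ℓ,pt}, and fix ranks r_{ℓ,1} ≤ n_ℓ, r_{ℓ,2} ≤ n_{ℓ+1}, r_{ℓ,3} ≤ n_d. Then there exist core tensors G_ℓ ∈ ℝ^{r_{ℓ,1}×r_{ℓ,2}×r_{ℓ,3}} and matrices U_ℓ^{(1)} ∈ ℝ^{n_ℓ×r_{ℓ,1}},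 U_ℓ^{(2)} ∈ ℝ^{n_{ℓ+1}×r_{ℓ,2}}, U_ℓ^{(3)} ∈ ℝ^{n_d×r_{ℓ,3}} such that, with A_{ℓ,ft} = A_{ℓ,pt} + G_ℓ ×₁ U_ℓ^{(1)} ×₂ U_ℓ^{(2)} ×₃ U_ℓ^{(3)}, for every x ∈ ℝ^{n_1}: ‖Ψ(x;{A_{ℓ,ft}}) − Ψ(x;{A_{ℓ,tg}})‖₂ ≤ Σ_{ℓ=1}^{L} (M K √n_d)^{L−ℓ} B √(n_ℓ n_d) · ( Σ_{r=r_{ℓ,1}+1}^{n_ℓ} σ_r(E_ℓ^{(1)})² + Σ_{r=r_{ℓ,2}+1}^{n_{ℓ+1}} σ_r(E_ℓ^{(2)})² + Σ_{r=r_{ℓ,3}+1}^{n_d} σ_r(E_ℓ^{(3)})² )^{1/2}. -/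
noncomputable section
open Finset Matrix

/-- `L`-layer KAN: composition of the first `L` layers.  The widths are
`n 0, n 1, …` (the paper's `n_1, …, n_{L+1}`) and layer `ℓ` (0-based) has
parameter tensor `A ℓ ∈ ℝ^{n ℓ × n (ℓ+1) × n_d}`. -/
def kanForward {nd : ℕ} (b : Fin nd → ℝ → ℝ) (n : ℕ → ℕ)
    (A : ∀ ℓ : ℕ, Fin (n ℓ) → Fin (n (ℓ + 1)) → Fin nd → ℝ) :
    ∀ L : ℕ, (Fin (n 0) → ℝ) → Fin (n L) → ℝ
  | 0, x => x
  | (L + 1), x => kanLayer b (A L) (kanForward b n A L x)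

lemma enorm_nonneg {ι : Type*} [Fintype ι] (x : ι → ℝ) : 0 ≤ _root_.enorm x :=
  Real.sqrt_nonneg _

lemma enorm_eq_norm {ι : Type*} [Fintype ι] (x : ι → ℝ) :
    _root_.enorm x = ‖(WithLp.equiv 2 (ι → ℝ)).symm x‖ := by
  rw [EuclideanSpace.norm_eq]
  simp [_root_.enorm, sq_abs]

lemma enorm_add_le_r {ι : Type*} [Fintype ι] (x y : ι → ℝ) :
    _root_.enorm (fun i => x i + y i) ≤ _root_.enorm x + _root_.enorm y := by
  rw [enorm_eq_norm, enorm_eq_norm, enorm_eq_norm]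
  have : (WithLp.equiv 2 (ι → ℝ)).symm (fun i => x i + y i)
      = (WithLp.equiv 2 (ι → ℝ)).symm x + (WithLp.equiv 2 (ι → ℝ)).symm y := rfl
  rw [this]; exact norm_add_le _ _

lemma enorm_zero_r {ι : Type*} [Fintype ι] : _root_.enorm (fun _ : ι => (0:ℝ)) = 0 := by
  simp [_root_.enorm]

lemma enorm_sq {ι : Type*} [Fintype ι] (x : ι → ℝ) : _root_.enorm x ^ 2 = ∑ i, x i ^ 2 := by
  rw [_root_.enorm, Real.sq_sqrt]; positivity

lemma ctr {α β : Type*} (M : Matrix α β ℝ) : Mᴴ = Mᵀ := by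
  ext i j; simp [Matrix.conjTranspose_apply]

lemma frob_trace {m : ℕ} {κ : Type*} [Fintype κ] (M : Matrix (Fin m) κ ℝ) :
    (∑ p, ∑ j, (M p j) ^ 2) = Matrix.trace (M * Mᴴ) := by
  simp [Matrix.trace, Matrix.mul_apply, Matrix.diag, Matrix.conjTranspose_apply, sq]

lemma proj_exists {m : ℕ} {ι : Type*} [Fintype ι] (E : Matrix (Fin m) ι ℝ) (r : ℕ)
    (hr : r ≤ m) :
    ∃ U : Matrix (Fin m) (Fin r) ℝ,
      (U * Uᵀ)ᵀ = U * Uᵀ ∧ (U * Uᵀ) * (U * Uᵀ) = U * Uᵀ ∧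
      (∑ p, ∑ j, ((E - U * Uᵀ * E) p j) ^ 2) ≤
        ∑ r' ∈ Finset.univ.filter (fun r' : Fin m => r ≤ (r' : ℕ)), sval E r' ^ 2 := by
  classical
  have hH := Matrix.isHermitian_mul_conjTranspose_self E
  set μ : Fin m → ℝ := hH.eigenvalues with hμ
  set σs : Equiv.Perm (Fin m) := Tuple.sort μ with hσ
  set V : Matrix (Fin m) (Fin m) ℝ :=
    (Matrix.IsHermitian.eigenvectorUnitary hH : Matrix (Fin m) (Fin m) ℝ) with hVdef
  have hVV : Vᴴ * V = 1 := by
    simpa [Matrix.star_eq_conjTranspose, hVdef] using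
      (Matrix.mem_unitaryGroup_iff').mp (Matrix.IsHermitian.eigenvectorUnitary hH).2
  set W : Matrix (Fin m) (Fin m) ℝ := Matrix.of (fun p i => V p (σs i)) with hWdef
  have hWW : Wᴴ * W = 1 := by
    ext i j
    have h1 : (Wᴴ * W) i j = (Vᴴ * V) (σs i) (σs j) := by
      simp [Matrix.mul_apply, Matrix.conjTranspose_apply, hWdef]
    rw [h1, hVV]
    simp [Matrix.one_apply, EmbeddingLike.apply_eq_iff_eq]
  have hspec : E * Eᴴ = W * Matrix.diagonal (μ ∘ σs) * Wᴴ := by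
    have h0 : E * Eᴴ = V * Matrix.diagonal μ * Vᴴ := by
      have h := hH.spectral_theorem
      simpa [Matrix.star_eq_conjTranspose, hVdef, hμ] using h
    rw [h0]
    ext p q
    rw [Matrix.mul_apply, Matrix.mul_apply]
    simp only [Matrix.mul_diagonal, Matrix.conjTranspose_apply, star_trivial,
      Matrix.of_apply, Function.comp_apply, hWdef]
    exact (Equiv.sum_comp σs (fun i => V p i * μ i * V q i)).symm
  set d : Fin m → ℝ := fun i => if m - r ≤ (i : ℕ) then 1 else 0 with hd
  have hιlt : ∀ j : Fin r, m - r + (j : ℕ) < m := fun j => by omega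
  set U : Matrix (Fin m) (Fin r) ℝ := Matrix.of (fun p j => W p ⟨m - r + j, hιlt j⟩) with hUdef
  set P : Matrix (Fin m) (Fin m) ℝ := W * Matrix.diagonal d * Wᴴ with hPdef
  set emb : Fin r ↪ Fin m :=
    ⟨fun j => ⟨m - r + j, hιlt j⟩, by intro a b hab; simpa [Fin.ext_iff] using hab⟩
    with hembdef
  have hset : Finset.univ.map emb = Finset.univ.filter (fun i : Fin m => m - r ≤ (i : ℕ)) := by
    ext i
    simp only [Finset.mem_map, Finset.mem_univ, true_and, Finset.mem_filter]
    constructor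
    · rintro ⟨j, rfl⟩
      show m - r ≤ ((emb j : Fin m) : ℕ)
      have : ((emb j : Fin m) : ℕ) = m - r + (j : ℕ) := rfl
      omega
    · intro hi
      refine ⟨⟨(i : ℕ) - (m - r), by omega⟩, ?_⟩
      have : ((emb ⟨(i : ℕ) - (m - r), by omega⟩ : Fin m) : ℕ)
          = m - r + ((i : ℕ) - (m - r)) := rfl
      ext
      rw [this]; omega
  have hUP : U * Uᵀ = P := by
    ext p q
    have hRHS : P p q = ∑ i ∈ Finset.univ.filter (fun i : Fin m => m - r ≤ (i : ℕ)),
        W p i * W q i := by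
      rw [hPdef, Matrix.mul_apply]
      simp only [Matrix.mul_diagonal, Matrix.conjTranspose_apply, star_trivial, hd]
      rw [Finset.sum_filter]
      congr 1; ext i; split <;> ring
    rw [Matrix.mul_apply, hRHS, ← hset, Finset.sum_map]
    rfl
  have hdd : (fun i => d i * d i) = d := by
    funext i; simp only [hd]; split <;> ring
  have hPP : P * P = P := by
    rw [hPdef]
    calc W * Matrix.diagonal d * Wᴴ * (W * Matrix.diagonal d * Wᴴ)
        = W * Matrix.diagonal d * (Wᴴ * W) * Matrix.diagonal d * Wᴴ := by
          simp only [Matrix.mul_assoc]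
      _ = W * (Matrix.diagonal d * Matrix.diagonal d) * Wᴴ := by
          rw [hWW]; simp only [Matrix.mul_assoc, Matrix.one_mul]
      _ = W * Matrix.diagonal d * Wᴴ := by
          rw [Matrix.diagonal_mul_diagonal]
          congr 1
          rw [hdd]
  have hPsymm : Pᴴ = P := by
    rw [hPdef]
    simp only [Matrix.conjTranspose_mul, Matrix.conjTranspose_conjTranspose]
    rw [Matrix.diagonal_conjTranspose]
    simp only [Matrix.mul_assoc]
    have : star d = d := by funext i; simp
    rw [this]
  have htr1 : Matrix.trace (E * Eᴴ) = ∑ i, μ (σs i) := by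
    rw [hspec, Matrix.trace_mul_cycle, hWW, Matrix.one_mul, Matrix.trace_diagonal]
    rfl
  have htr2 : Matrix.trace (P * (E * Eᴴ)) = ∑ i, d i * μ (σs i) := by
    rw [hspec, hPdef]
    have hcomb : W * Matrix.diagonal d * Wᴴ * (W * Matrix.diagonal (μ ∘ σs) * Wᴴ)
        = W * (Matrix.diagonal d * Matrix.diagonal (μ ∘ σs)) * Wᴴ := by
      calc W * Matrix.diagonal d * Wᴴ * (W * Matrix.diagonal (μ ∘ σs) * Wᴴ)
          = W * Matrix.diagonal d * (Wᴴ * W) * Matrix.diagonal (μ ∘ σs) * Wᴴ := by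
            simp only [Matrix.mul_assoc]
        _ = W * (Matrix.diagonal d * Matrix.diagonal (μ ∘ σs)) * Wᴴ := by
            rw [hWW]; simp only [Matrix.mul_assoc, Matrix.one_mul]
    rw [hcomb, Matrix.trace_mul_cycle, hWW, Matrix.one_mul,
      Matrix.diagonal_mul_diagonal, Matrix.trace_diagonal]
    rfl
  have hQ : (1 - P) * (1 - P) = (1 - P) := by
    rw [Matrix.mul_sub, Matrix.sub_mul, Matrix.sub_mul, hPP]
    simp only [Matrix.one_mul, Matrix.mul_one]
    abel
  have key : (∑ p, ∑ j, ((E - P * E) p j) ^ 2)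
      = ∑ i, (1 - d i) * μ (σs i) := by
    rw [frob_trace]
    have h1 : E - P * E = (1 - P) * E := by rw [Matrix.sub_mul, Matrix.one_mul]
    rw [h1, Matrix.conjTranspose_mul]
    have h2 : (1 - P) * E * (Eᴴ * (1 - P)ᴴ) = (1 - P) * (E * Eᴴ) * (1 - P) := by
      have hsym : (1 - P)ᴴ = 1 - P := by
        rw [Matrix.conjTranspose_sub, hPsymm]; simp
      rw [hsym]; simp only [Matrix.mul_assoc]
    rw [h2, Matrix.trace_mul_cycle, hQ, Matrix.sub_mul, Matrix.one_mul,
      Matrix.trace_sub, htr1, htr2, ← Finset.sum_sub_distrib]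
    congr 1; ext i; ring
  have hsval : ∀ r' : Fin m, sval E r' ^ 2 = μ (σs (r'.rev)) := by
    intro r'
    have hnn : 0 ≤ μ (σs (r'.rev)) := by
      rw [hμ]; exact Matrix.eigenvalues_self_mul_conjTranspose_nonneg E _
    have hs : sval E r' = Real.sqrt (μ (σs (r'.rev))) := rfl
    rw [hs, Real.sq_sqrt hnn]
  have himg : (Finset.univ.filter (fun r' : Fin m => r ≤ (r' : ℕ))).image Fin.rev
      = Finset.univ.filter (fun i : Fin m => (i : ℕ) < m - r) := by
    ext i
    simp only [Finset.mem_image, Finset.mem_filter, Finset.mem_univ, true_and]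
    constructor
    · rintro ⟨r', hr', rfl⟩
      have := r'.isLt
      simp only [Fin.val_rev]
      omega
    · intro hi
      have him := i.isLt
      refine ⟨i.rev, ?_, by simp⟩
      simp only [Fin.val_rev]; omega
  have hsum : ∑ r' ∈ Finset.univ.filter (fun r' : Fin m => r ≤ (r' : ℕ)), sval E r' ^ 2
      = ∑ i ∈ Finset.univ.filter (fun i : Fin m => (i : ℕ) < m - r), μ (σs i) := by
    rw [← himg, Finset.sum_image (by intro a _ b _ h; exact Fin.rev_injective h)]
    exact Finset.sum_congr rfl (fun r' _ => hsval r')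
  refine ⟨U, ?_, ?_, ?_⟩
  · rw [hUP, ← ctr, hPsymm]
  · rw [hUP]; exact hPP
  · rw [hUP, key, hsum]
    apply le_of_eq
    rw [Finset.sum_filter]
    congr 1; ext i
    simp only [hd]
    by_cases h : (i : ℕ) < m - r
    · simp [h, show ¬ (m - r ≤ (i : ℕ)) by omega]
    · simp [h, show (m - r ≤ (i : ℕ)) by omega]

-- ## mode products
variable {n1 n2 n3 a a' : ℕ}

def md1 {n1 n1' n2 n3 : ℕ} (Q : Matrix (Fin n1) (Fin n1') ℝ)
    (T : Fin n1' → Fin n2 → Fin n3 → ℝ) : Fin n1 → Fin n2 → Fin n3 → ℝ :=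
  fun p q k => ∑ p', Q p p' * T p' q k

def md2 {n1 n2 n2' n3 : ℕ} (Q : Matrix (Fin n2) (Fin n2') ℝ)
    (T : Fin n1 → Fin n2' → Fin n3 → ℝ) : Fin n1 → Fin n2 → Fin n3 → ℝ :=
  fun p q k => ∑ q', Q q q' * T p q' k

def md3 {n1 n2 n3 n3' : ℕ} (Q : Matrix (Fin n3) (Fin n3') ℝ)
    (T : Fin n1 → Fin n2 → Fin n3' → ℝ) : Fin n1 → Fin n2 → Fin n3 → ℝ :=
  fun p q k => ∑ k', Q k k' * T p q k'

def ip {n1 n2 n3 : ℕ} (T S : Fin n1 → Fin n2 → Fin n3 → ℝ) : ℝ :=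
  ∑ p, ∑ q, ∑ k, T p q k * S p q k

lemma md1_one (T : Fin n1 → Fin n2 → Fin n3 → ℝ) : md1 (1 : Matrix (Fin n1) (Fin n1) ℝ) T = T := by
  funext p q k
  simp [md1, Matrix.one_apply]

lemma md2_one (T : Fin n1 → Fin n2 → Fin n3 → ℝ) : md2 (1 : Matrix (Fin n2) (Fin n2) ℝ) T = T := by
  funext p q k
  simp [md2, Matrix.one_apply]

lemma md3_one (T : Fin n1 → Fin n2 → Fin n3 → ℝ) : md3 (1 : Matrix (Fin n3) (Fin n3) ℝ) T = T := by
  funext p q k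
  simp [md3, Matrix.one_apply]

lemma md1_sub (A B : Matrix (Fin n1) (Fin n1) ℝ) (T : Fin n1 → Fin n2 → Fin n3 → ℝ) :
    md1 (A - B) T = md1 A T - md1 B T := by
  funext p q k
  simp [md1, sub_mul, Finset.sum_sub_distrib]

lemma md2_sub (A B : Matrix (Fin n2) (Fin n2) ℝ) (T : Fin n1 → Fin n2 → Fin n3 → ℝ) :
    md2 (A - B) T = md2 A T - md2 B T := by
  funext p q k
  simp [md2, sub_mul, Finset.sum_sub_distrib]

lemma md3_sub (A B : Matrix (Fin n3) (Fin n3) ℝ) (T : Fin n1 → Fin n2 → Fin n3 → ℝ) :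
    md3 (A - B) T = md3 A T - md3 B T := by
  funext p q k
  simp [md3, sub_mul, Finset.sum_sub_distrib]

lemma md1_md2 {n1' n2' : ℕ} (A : Matrix (Fin n1) (Fin n1') ℝ) (B : Matrix (Fin n2) (Fin n2') ℝ)
    (T : Fin n1' → Fin n2' → Fin n3 → ℝ) : md1 A (md2 B T) = md2 B (md1 A T) := by
  funext p q k
  simp only [md1, md2, Finset.mul_sum]
  rw [Finset.sum_comm]
  refine Finset.sum_congr rfl fun q' _ => Finset.sum_congr rfl fun p' _ => by ring

lemma md1_md3 {n1' n3' : ℕ} (A : Matrix (Fin n1) (Fin n1') ℝ) (B : Matrix (Fin n3) (Fin n3') ℝ)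
    (T : Fin n1' → Fin n2 → Fin n3' → ℝ) : md1 A (md3 B T) = md3 B (md1 A T) := by
  funext p q k
  simp only [md1, md3, Finset.mul_sum]
  rw [Finset.sum_comm]
  refine Finset.sum_congr rfl fun q' _ => Finset.sum_congr rfl fun p' _ => by ring

lemma md2_md3 {n2' n3' : ℕ} (A : Matrix (Fin n2) (Fin n2') ℝ) (B : Matrix (Fin n3) (Fin n3') ℝ)
    (T : Fin n1 → Fin n2' → Fin n3' → ℝ) : md2 A (md3 B T) = md3 B (md2 A T) := by
  funext p q k
  simp only [md2, md3, Finset.mul_sum]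
  rw [Finset.sum_comm]
  refine Finset.sum_congr rfl fun q' _ => Finset.sum_congr rfl fun p' _ => by ring

lemma md1_comp {b c : ℕ} (A : Matrix (Fin n1) (Fin b) ℝ) (B : Matrix (Fin b) (Fin c) ℝ)
    (T : Fin c → Fin n2 → Fin n3 → ℝ) : md1 A (md1 B T) = md1 (A * B) T := by
  funext p q k
  simp only [md1, Finset.mul_sum, Matrix.mul_apply, Finset.sum_mul]
  rw [Finset.sum_comm]
  refine Finset.sum_congr rfl fun x _ => Finset.sum_congr rfl fun y _ => by ring

lemma md2_comp {b c : ℕ} (A : Matrix (Fin n2) (Fin b) ℝ) (B : Matrix (Fin b) (Fin c) ℝ)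
    (T : Fin n1 → Fin c → Fin n3 → ℝ) : md2 A (md2 B T) = md2 (A * B) T := by
  funext p q k
  simp only [md2, Finset.mul_sum, Matrix.mul_apply, Finset.sum_mul]
  rw [Finset.sum_comm]
  refine Finset.sum_congr rfl fun x _ => Finset.sum_congr rfl fun y _ => by ring

lemma md3_comp {b c : ℕ} (A : Matrix (Fin n3) (Fin b) ℝ) (B : Matrix (Fin b) (Fin c) ℝ)
    (T : Fin n1 → Fin n2 → Fin c → ℝ) : md3 A (md3 B T) = md3 (A * B) T := by
  funext p q k
  simp only [md3, Finset.mul_sum, Matrix.mul_apply, Finset.sum_mul]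
  rw [Finset.sum_comm]
  refine Finset.sum_congr rfl fun x _ => Finset.sum_congr rfl fun y _ => by ring

-- unfolding bridges
lemma unfold1_md1 (Q : Matrix (Fin n1) (Fin n1) ℝ) (T : Fin n1 → Fin n2 → Fin n3 → ℝ) :
    unfold1 (md1 Q T) = Q * unfold1 T := by
  ext p qk; simp [unfold1, md1, Matrix.mul_apply]

lemma unfold2_md2 (Q : Matrix (Fin n2) (Fin n2) ℝ) (T : Fin n1 → Fin n2 → Fin n3 → ℝ) :
    unfold2 (md2 Q T) = Q * unfold2 T := by
  ext q pk; simp [unfold2, md2, Matrix.mul_apply]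

lemma unfold3_md3 (Q : Matrix (Fin n3) (Fin n3) ℝ) (T : Fin n1 → Fin n2 → Fin n3 → ℝ) :
    unfold3 (md3 Q T) = Q * unfold3 T := by
  ext k pq; simp [unfold3, md3, Matrix.mul_apply]

lemma ip_eq1 (T S : Fin n1 → Fin n2 → Fin n3 → ℝ) :
    ip T S = Matrix.trace (unfold1 T * (unfold1 S)ᵀ) := by
  simp [ip, Matrix.trace, Matrix.mul_apply, Matrix.diag, unfold1, Fintype.sum_prod_type]

lemma ip_eq2 (T S : Fin n1 → Fin n2 → Fin n3 → ℝ) :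
    ip T S = Matrix.trace (unfold2 T * (unfold2 S)ᵀ) := by
  have h : ip T S = ∑ q, ∑ p, ∑ k, T p q k * S p q k := by
    rw [ip]; exact Finset.sum_comm
  rw [h]
  simp [Matrix.trace, Matrix.mul_apply, Matrix.diag, unfold2, Fintype.sum_prod_type]

lemma ip_eq3 (T S : Fin n1 → Fin n2 → Fin n3 → ℝ) :
    ip T S = Matrix.trace (unfold3 T * (unfold3 S)ᵀ) := by
  have h : ip T S = ∑ k, ∑ p, ∑ q, T p q k * S p q k := by
    rw [ip]
    calc ∑ p, ∑ q, ∑ k, T p q k * S p q k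
        = ∑ p, ∑ k, ∑ q, T p q k * S p q k :=
          Finset.sum_congr rfl fun p _ => Finset.sum_comm
      _ = ∑ k, ∑ p, ∑ q, T p q k * S p q k := Finset.sum_comm
  rw [h]
  simp [Matrix.trace, Matrix.mul_apply, Matrix.diag, unfold3, Fintype.sum_prod_type]

lemma frob_trace'' {m : ℕ} {κ : Type*} [Fintype κ] (M : Matrix (Fin m) κ ℝ) :
    Matrix.trace (M * Mᵀ) = ∑ p, ∑ j, (M p j) ^ 2 := by
  simp [Matrix.trace, Matrix.mul_apply, Matrix.diag, sq]

lemma trace_self_nonneg {m : ℕ} {κ : Type*} [Fintype κ] (M : Matrix (Fin m) κ ℝ) :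
    0 ≤ Matrix.trace (M * Mᵀ) := by
  rw [frob_trace'']; positivity

lemma trace_proj {a : ℕ} (R : Matrix (Fin a) (Fin a) ℝ) (hs : Rᵀ = R) (hi : R * R = R)
    {κ : Type*} [Fintype κ] (X : Matrix (Fin a) κ ℝ) :
    Matrix.trace ((R * X) * (R * X)ᵀ) = Matrix.trace (R * (X * Xᵀ)) := by
  rw [Matrix.transpose_mul, hs]
  have e1 : R * X * (Xᵀ * R) = R * X * Xᵀ * R := by simp [Matrix.mul_assoc]
  rw [e1, Matrix.trace_mul_cycle]
  rw [← Matrix.mul_assoc R R X, hi, Matrix.mul_assoc]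

lemma trace_proj_le {a : ℕ} (R : Matrix (Fin a) (Fin a) ℝ) (hs : Rᵀ = R) (hi : R * R = R)
    {κ : Type*} [Fintype κ] (X : Matrix (Fin a) κ ℝ) :
    Matrix.trace ((R * X) * (R * X)ᵀ) ≤ Matrix.trace (X * Xᵀ) := by
  have h1 := trace_proj R hs hi X
  have hs' : (1 - R)ᵀ = 1 - R := by rw [Matrix.transpose_sub, hs, Matrix.transpose_one]
  have hi' : (1 - R) * (1 - R) = 1 - R := by
    rw [Matrix.mul_sub, Matrix.sub_mul, Matrix.sub_mul, hi]
    simp only [Matrix.one_mul, Matrix.mul_one]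
    abel
  have h3 := trace_self_nonneg ((1 - R) * X)
  rw [trace_proj (1 - R) hs' hi' X] at h3
  have h4 : Matrix.trace ((1 - R) * (X * Xᵀ))
      = Matrix.trace (X * Xᵀ) - Matrix.trace (R * (X * Xᵀ)) := by
    rw [Matrix.sub_mul, Matrix.one_mul, Matrix.trace_sub]
  rw [h4] at h3
  rw [h1]
  linarith

lemma ip_md1_le (R : Matrix (Fin n1) (Fin n1) ℝ) (hs : Rᵀ = R) (hi : R * R = R)
    (T : Fin n1 → Fin n2 → Fin n3 → ℝ) : ip (md1 R T) (md1 R T) ≤ ip T T := by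
  rw [ip_eq1, ip_eq1, unfold1_md1]
  exact trace_proj_le R hs hi (unfold1 T)

lemma ip_md2_le (R : Matrix (Fin n2) (Fin n2) ℝ) (hs : Rᵀ = R) (hi : R * R = R)
    (T : Fin n1 → Fin n2 → Fin n3 → ℝ) : ip (md2 R T) (md2 R T) ≤ ip T T := by
  rw [ip_eq2, ip_eq2, unfold2_md2]
  exact trace_proj_le R hs hi (unfold2 T)

lemma ip_md1_ortho (A B : Matrix (Fin n1) (Fin n1) ℝ) (h : Aᵀ * B = 0)
    (X Y : Fin n1 → Fin n2 → Fin n3 → ℝ) : ip (md1 A X) (md1 B Y) = 0 := by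
  have hBA : Bᵀ * A = 0 := by
    have h' := congrArg Matrix.transpose h
    simpa [Matrix.transpose_mul] using h'
  rw [ip_eq1, unfold1_md1, unfold1_md1, Matrix.transpose_mul, Matrix.trace_mul_comm,
    Matrix.mul_assoc (unfold1 Y)ᵀ Bᵀ (A * unfold1 X),
    ← Matrix.mul_assoc Bᵀ A (unfold1 X), hBA]
  simp

lemma ip_md2_ortho (A B : Matrix (Fin n2) (Fin n2) ℝ) (h : Aᵀ * B = 0)
    (X Y : Fin n1 → Fin n2 → Fin n3 → ℝ) : ip (md2 A X) (md2 B Y) = 0 := by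
  have hBA : Bᵀ * A = 0 := by
    have h' := congrArg Matrix.transpose h
    simpa [Matrix.transpose_mul] using h'
  rw [ip_eq2, unfold2_md2, unfold2_md2, Matrix.transpose_mul, Matrix.trace_mul_comm,
    Matrix.mul_assoc (unfold2 Y)ᵀ Bᵀ (A * unfold2 X),
    ← Matrix.mul_assoc Bᵀ A (unfold2 X), hBA]
  simp

lemma ip_three (T1 T2 T3 : Fin n1 → Fin n2 → Fin n3 → ℝ)
    (h12 : ip T1 T2 = 0) (h13 : ip T1 T3 = 0) (h23 : ip T2 T3 = 0) :
    ip (T1 + T2 + T3) (T1 + T2 + T3) = ip T1 T1 + ip T2 T2 + ip T3 T3 := by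
  have expand : ip (T1 + T2 + T3) (T1 + T2 + T3)
      = ip T1 T1 + ip T2 T2 + ip T3 T3 + 2 * ip T1 T2 + 2 * ip T1 T3 + 2 * ip T2 T3 := by
    simp only [ip, Pi.add_apply]
    simp only [← Finset.sum_add_distrib, Finset.mul_sum]
    refine Finset.sum_congr rfl fun p _ => Finset.sum_congr rfl fun q _ =>
      Finset.sum_congr rfl fun k _ => by ring
  rw [expand, h12, h13, h23]; ring

lemma md1_linsub {n1' : ℕ} (A : Matrix (Fin n1) (Fin n1') ℝ)
    (X Y : Fin n1' → Fin n2 → Fin n3 → ℝ) : md1 A (X - Y) = md1 A X - md1 A Y := by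
  funext p q k
  simp [md1, mul_sub, Finset.sum_sub_distrib]

lemma md2_linsub {n2' : ℕ} (A : Matrix (Fin n2) (Fin n2') ℝ)
    (X Y : Fin n1 → Fin n2' → Fin n3 → ℝ) : md2 A (X - Y) = md2 A X - md2 A Y := by
  funext p q k
  simp [md2, mul_sub, Finset.sum_sub_distrib]

lemma tucker_eq_md {r1 r2 r3 : ℕ} (G : Fin r1 → Fin r2 → Fin r3 → ℝ)
    (U1 : Matrix (Fin n1) (Fin r1) ℝ) (U2 : Matrix (Fin n2) (Fin r2) ℝ)
    (U3 : Matrix (Fin n3) (Fin r3) ℝ) :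
    tucker G U1 U2 U3 = md1 U1 (md2 U2 (md3 U3 G)) := by
  funext p q k
  simp only [tucker, md1, md2, md3, Finset.mul_sum]
  refine Finset.sum_congr rfl fun a _ => Finset.sum_congr rfl fun b _ =>
    Finset.sum_congr rfl fun c _ => by ring

lemma tucker_exists {n1 n2 n3 r1 r2 r3 : ℕ} (E : Fin n1 → Fin n2 → Fin n3 → ℝ)
    (h1 : r1 ≤ n1) (h2 : r2 ≤ n2) (h3 : r3 ≤ n3) :
    ∃ (G : Fin r1 → Fin r2 → Fin r3 → ℝ) (U1 : Matrix (Fin n1) (Fin r1) ℝ)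
      (U2 : Matrix (Fin n2) (Fin r2) ℝ) (U3 : Matrix (Fin n3) (Fin r3) ℝ),
      ip (E - tucker G U1 U2 U3) (E - tucker G U1 U2 U3) ≤
        (∑ r' ∈ Finset.univ.filter (fun r' : Fin n1 => r1 ≤ (r' : ℕ)),
            sval (unfold1 E) r' ^ 2)
      + (∑ r' ∈ Finset.univ.filter (fun r' : Fin n2 => r2 ≤ (r' : ℕ)),
            sval (unfold2 E) r' ^ 2)
      + (∑ r' ∈ Finset.univ.filter (fun r' : Fin n3 => r3 ≤ (r' : ℕ)),
            sval (unfold3 E) r' ^ 2) := by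
  obtain ⟨U1, hs1, hi1, hb1⟩ := proj_exists (unfold1 E) r1 h1
  obtain ⟨U2, hs2, hi2, hb2⟩ := proj_exists (unfold2 E) r2 h2
  obtain ⟨U3, hs3, hi3, hb3⟩ := proj_exists (unfold3 E) r3 h3
  set Q1 := U1 * U1ᵀ with hQ1
  set Q2 := U2 * U2ᵀ with hQ2
  set Q3 := U3 * U3ᵀ with hQ3
  refine ⟨md1 U1ᵀ (md2 U2ᵀ (md3 U3ᵀ E)), U1, U2, U3, ?_⟩
  have htuck : tucker (md1 U1ᵀ (md2 U2ᵀ (md3 U3ᵀ E))) U1 U2 U3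
      = md1 Q1 (md2 Q2 (md3 Q3 E)) := by
    rw [tucker_eq_md]
    calc md1 U1 (md2 U2 (md3 U3 (md1 U1ᵀ (md2 U2ᵀ (md3 U3ᵀ E)))))
        = md1 U1 (md2 U2 (md1 U1ᵀ (md3 U3 (md2 U2ᵀ (md3 U3ᵀ E))))) := by rw [← md1_md3]
      _ = md1 U1 (md2 U2 (md1 U1ᵀ (md2 U2ᵀ (md3 U3 (md3 U3ᵀ E))))) := by rw [← md2_md3]
      _ = md1 U1 (md1 U1ᵀ (md2 U2 (md2 U2ᵀ (md3 U3 (md3 U3ᵀ E))))) := by rw [← md1_md2]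
      _ = md1 Q1 (md2 Q2 (md3 Q3 E)) := by rw [md1_comp, md2_comp, md3_comp]
  rw [htuck]
  set T1 := md1 (1 - Q1) E with hT1
  set T2 := md1 Q1 (md2 (1 - Q2) E) with hT2
  set T3 := md1 Q1 (md2 Q2 (md3 (1 - Q3) E)) with hT3
  have hdecomp : E - md1 Q1 (md2 Q2 (md3 Q3 E)) = T1 + T2 + T3 := by
    have l1 : T1 = E - md1 Q1 E := by rw [hT1, md1_sub, md1_one]
    have l2 : T2 = md1 Q1 E - md1 Q1 (md2 Q2 E) := by
      rw [hT2, md2_sub, md2_one, md1_linsub]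
    have l3 : T3 = md1 Q1 (md2 Q2 E) - md1 Q1 (md2 Q2 (md3 Q3 E)) := by
      rw [hT3, md3_sub, md3_one, md2_linsub, md1_linsub]
    rw [l1, l2, l3]; abel
  rw [hdecomp]
  have horth1 : (1 - Q1)ᵀ * Q1 = 0 := by
    rw [Matrix.transpose_sub, hs1, Matrix.transpose_one, Matrix.sub_mul, Matrix.one_mul, hi1]
    simp
  have horth2 : (1 - Q2)ᵀ * Q2 = 0 := by
    rw [Matrix.transpose_sub, hs2, Matrix.transpose_one, Matrix.sub_mul, Matrix.one_mul, hi2]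
    simp
  have h12 : ip T1 T2 = 0 := ip_md1_ortho (1 - Q1) Q1 horth1 _ _
  have h13 : ip T1 T3 = 0 := ip_md1_ortho (1 - Q1) Q1 horth1 _ _
  have h23 : ip T2 T3 = 0 := by
    have e2 : T2 = md2 (1 - Q2) (md1 Q1 E) := by rw [hT2, md1_md2]
    have e3 : T3 = md2 Q2 (md1 Q1 (md3 (1 - Q3) E)) := by rw [hT3, md1_md2]
    rw [e2, e3]
    exact ip_md2_ortho (1 - Q2) Q2 horth2 _ _
  rw [ip_three T1 T2 T3 h12 h13 h23]
  -- bound each term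
  have hub1 : ip T1 T1 ≤ ∑ r' ∈ Finset.univ.filter (fun r' : Fin n1 => r1 ≤ (r' : ℕ)),
      sval (unfold1 E) r' ^ 2 := by
    have e : (1 - Q1) * unfold1 E = unfold1 E - Q1 * unfold1 E := by
      rw [Matrix.sub_mul, Matrix.one_mul]
    have : ip T1 T1 = ∑ p, ∑ j, ((unfold1 E - Q1 * unfold1 E) p j) ^ 2 := by
      rw [hT1, ip_eq1, unfold1_md1, e, frob_trace'']
    rw [this]
    exact hb1
  have hub2 : ip T2 T2 ≤ ∑ r' ∈ Finset.univ.filter (fun r' : Fin n2 => r2 ≤ (r' : ℕ)),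
      sval (unfold2 E) r' ^ 2 := by
    have hstep : ip T2 T2 ≤ ip (md2 (1 - Q2) E) (md2 (1 - Q2) E) := by
      rw [hT2]
      exact ip_md1_le Q1 hs1 hi1 _
    refine hstep.trans ?_
    have e : (1 - Q2) * unfold2 E = unfold2 E - Q2 * unfold2 E := by
      rw [Matrix.sub_mul, Matrix.one_mul]
    have : ip (md2 (1 - Q2) E) (md2 (1 - Q2) E)
        = ∑ p, ∑ j, ((unfold2 E - Q2 * unfold2 E) p j) ^ 2 := by
      rw [ip_eq2, unfold2_md2, e, frob_trace'']
    rw [this]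
    exact hb2
  have hub3 : ip T3 T3 ≤ ∑ r' ∈ Finset.univ.filter (fun r' : Fin n3 => r3 ≤ (r' : ℕ)),
      sval (unfold3 E) r' ^ 2 := by
    have hstep1 : ip T3 T3 ≤ ip (md2 Q2 (md3 (1 - Q3) E)) (md2 Q2 (md3 (1 - Q3) E)) := by
      rw [hT3]
      exact ip_md1_le Q1 hs1 hi1 _
    have hstep2 : ip (md2 Q2 (md3 (1 - Q3) E)) (md2 Q2 (md3 (1 - Q3) E))
        ≤ ip (md3 (1 - Q3) E) (md3 (1 - Q3) E) := ip_md2_le Q2 hs2 hi2 _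
    refine (hstep1.trans hstep2).trans ?_
    have e : (1 - Q3) * unfold3 E = unfold3 E - Q3 * unfold3 E := by
      rw [Matrix.sub_mul, Matrix.one_mul]
    have hq : ip (md3 (1 - Q3) E) (md3 (1 - Q3) E)
        = Matrix.trace (unfold3 (md3 (1 - Q3) E) * (unfold3 (md3 (1 - Q3) E))ᵀ) := ip_eq3 _ _
    have : ip (md3 (1 - Q3) E) (md3 (1 - Q3) E)
        = ∑ p, ∑ j, ((unfold3 E - Q3 * unfold3 E) p j) ^ 2 := by
      rw [hq, unfold3_md3, e, frob_trace'']
    rw [this]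
    exact hb3
  linarith

lemma enorm_nonneg' {ι : Type*} [Fintype ι] (x : ι → ℝ) : 0 ≤ _root_.enorm x :=
  Real.sqrt_nonneg _

lemma frob3_nonneg {n1 n2 n3 : ℕ} (A : Fin n1 → Fin n2 → Fin n3 → ℝ) : 0 ≤ frob3 A :=
  Real.sqrt_nonneg _

lemma enorm_le_of_sq {ι : Type*} [Fintype ι] (x : ι → ℝ) (c : ℝ) (hc : 0 ≤ c)
    (h : ∑ i, x i ^ 2 ≤ c ^ 2) : _root_.enorm x ≤ c := by
  rw [_root_.enorm]
  calc Real.sqrt (∑ i, x i ^ 2) ≤ Real.sqrt (c ^ 2) := Real.sqrt_le_sqrt h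
    _ = c := by rw [Real.sqrt_sq hc]

lemma sq_le_of_abs_le {a B : ℝ} (h : |a| ≤ B) : a ^ 2 ≤ B ^ 2 := by
  have h1 : a ^ 2 = |a| ^ 2 := (sq_abs a).symm
  rw [h1]
  exact pow_le_pow_left₀ (abs_nonneg a) h 2

lemma layer_bound1 {n m nd : ℕ} (b : Fin nd → ℝ → ℝ) (B : ℝ) (hB : 0 ≤ B)
    (hbound : ∀ (k : Fin nd) (t : ℝ), |b k t| ≤ B)
    (D : Fin n → Fin m → Fin nd → ℝ) (z : Fin n → ℝ) :
    _root_.enorm (fun q : Fin m => ∑ p, ∑ k, D p q k * b k (z p)) ≤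
      B * Real.sqrt ((n : ℝ) * (nd : ℝ)) * frob3 D := by
  apply enorm_le_of_sq _ _
    (mul_nonneg (mul_nonneg hB (Real.sqrt_nonneg _)) (frob3_nonneg _))
  have hc2 : (B * Real.sqrt ((n : ℝ) * (nd : ℝ)) * frob3 D) ^ 2
      = B ^ 2 * ((n : ℝ) * (nd : ℝ)) * (∑ p, ∑ q, ∑ k, D p q k ^ 2) := by
    rw [mul_pow, mul_pow, Real.sq_sqrt (by positivity), frob3, Real.sq_sqrt (by positivity)]
  rw [hc2]
  have keyq : ∀ q : Fin m, (∑ p, ∑ k, D p q k * b k (z p)) ^ 2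
      ≤ (∑ p, ∑ k, D p q k ^ 2) * ((n : ℝ) * (nd : ℝ) * B ^ 2) := by
    intro q
    have h1 : (∑ p, ∑ k, D p q k * b k (z p))
        = ∑ x : Fin n × Fin nd, D x.1 q x.2 * b x.2 (z x.1) := by
      rw [Fintype.sum_prod_type]
    have h1' : (∑ p, ∑ k, D p q k ^ 2) = ∑ x : Fin n × Fin nd, D x.1 q x.2 ^ 2 := by
      rw [Fintype.sum_prod_type]
    have hcs := Finset.sum_mul_sq_le_sq_mul_sq Finset.univ
      (fun x : Fin n × Fin nd => D x.1 q x.2) (fun x : Fin n × Fin nd => b x.2 (z x.1))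
    have h2 : (∑ x : Fin n × Fin nd, (b x.2 (z x.1)) ^ 2) ≤ (n : ℝ) * (nd : ℝ) * B ^ 2 := by
      calc (∑ x : Fin n × Fin nd, (b x.2 (z x.1)) ^ 2)
          ≤ ∑ _x : Fin n × Fin nd, B ^ 2 :=
            Finset.sum_le_sum fun x _ => sq_le_of_abs_le (hbound x.2 (z x.1))
        _ = (n : ℝ) * (nd : ℝ) * B ^ 2 := by
            rw [Finset.sum_const, Finset.card_univ, Fintype.card_prod]
            simp only [Fintype.card_fin, nsmul_eq_mul]
            push_cast
            ring
    rw [h1, h1']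
    calc (∑ x : Fin n × Fin nd, D x.1 q x.2 * b x.2 (z x.1)) ^ 2
        ≤ (∑ x : Fin n × Fin nd, D x.1 q x.2 ^ 2) *
            (∑ x : Fin n × Fin nd, (b x.2 (z x.1)) ^ 2) := hcs
      _ ≤ (∑ x : Fin n × Fin nd, D x.1 q x.2 ^ 2) * ((n : ℝ) * (nd : ℝ) * B ^ 2) := by
          apply mul_le_mul_of_nonneg_left h2 (by positivity)
  calc ∑ q, (∑ p, ∑ k, D p q k * b k (z p)) ^ 2
      ≤ ∑ q, (∑ p, ∑ k, D p q k ^ 2) * ((n : ℝ) * (nd : ℝ) * B ^ 2) :=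
        Finset.sum_le_sum fun q _ => keyq q
    _ = B ^ 2 * ((n : ℝ) * (nd : ℝ)) * (∑ p, ∑ q, ∑ k, D p q k ^ 2) := by
        rw [← Finset.sum_mul, Finset.sum_comm]
        ring

lemma layer_bound2 {n m nd : ℕ} (b : Fin nd → ℝ → ℝ) (K : ℝ) (hK : 0 ≤ K)
    (hlip : ∀ (k : Fin nd) (s t : ℝ), |b k s - b k t| ≤ K * |s - t|)
    (A : Fin n → Fin m → Fin nd → ℝ) (z z' : Fin n → ℝ) :
    _root_.enorm (fun q : Fin m => ∑ p, ∑ k, A p q k * (b k (z p) - b k (z' p))) ≤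
      K * Real.sqrt (nd : ℝ) * frob3 A * _root_.enorm (fun p => z p - z' p) := by
  apply enorm_le_of_sq _ _
    (mul_nonneg (mul_nonneg (mul_nonneg hK (Real.sqrt_nonneg _)) (frob3_nonneg _))
      (enorm_nonneg' _))
  have hc2 : (K * Real.sqrt (nd : ℝ) * frob3 A * _root_.enorm (fun p => z p - z' p)) ^ 2
      = K ^ 2 * (nd : ℝ) * (∑ p, ∑ q, ∑ k, A p q k ^ 2) * (∑ p, (z p - z' p) ^ 2) := by
    rw [mul_pow, mul_pow, mul_pow, Real.sq_sqrt (by positivity), frob3,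
      Real.sq_sqrt (by positivity), _root_.enorm, Real.sq_sqrt (by positivity)]
  rw [hc2]
  have keyq : ∀ q : Fin m, (∑ p, ∑ k, A p q k * (b k (z p) - b k (z' p))) ^ 2
      ≤ (∑ p, ∑ k, A p q k ^ 2) * (K ^ 2 * (nd : ℝ) * (∑ p, (z p - z' p) ^ 2)) := by
    intro q
    have h1 : (∑ p, ∑ k, A p q k * (b k (z p) - b k (z' p)))
        = ∑ x : Fin n × Fin nd, A x.1 q x.2 * (b x.2 (z x.1) - b x.2 (z' x.1)) := by
      rw [Fintype.sum_prod_type]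
    have h1' : (∑ p, ∑ k, A p q k ^ 2) = ∑ x : Fin n × Fin nd, A x.1 q x.2 ^ 2 := by
      rw [Fintype.sum_prod_type]
    have hcs := Finset.sum_mul_sq_le_sq_mul_sq Finset.univ
      (fun x : Fin n × Fin nd => A x.1 q x.2)
      (fun x : Fin n × Fin nd => b x.2 (z x.1) - b x.2 (z' x.1))
    have h2 : (∑ x : Fin n × Fin nd, (b x.2 (z x.1) - b x.2 (z' x.1)) ^ 2)
        ≤ K ^ 2 * (nd : ℝ) * (∑ p, (z p - z' p) ^ 2) := by
      calc (∑ x : Fin n × Fin nd, (b x.2 (z x.1) - b x.2 (z' x.1)) ^ 2)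
          ≤ ∑ x : Fin n × Fin nd, K ^ 2 * (z x.1 - z' x.1) ^ 2 := by
            refine Finset.sum_le_sum fun x _ => ?_
            have h := hlip x.2 (z x.1) (z' x.1)
            calc (b x.2 (z x.1) - b x.2 (z' x.1)) ^ 2
                ≤ (K * |z x.1 - z' x.1|) ^ 2 := sq_le_of_abs_le h
              _ = K ^ 2 * (z x.1 - z' x.1) ^ 2 := by rw [mul_pow, sq_abs]
        _ = K ^ 2 * (nd : ℝ) * (∑ p, (z p - z' p) ^ 2) := by
            rw [Fintype.sum_prod_type]
            have hcst : ∀ p : Fin n, (∑ _k : Fin nd, K ^ 2 * (z p - z' p) ^ 2)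
                = (nd : ℝ) * (K ^ 2 * (z p - z' p) ^ 2) := by
              intro p
              rw [Finset.sum_const, Finset.card_univ, Fintype.card_fin, nsmul_eq_mul]
            rw [Finset.sum_congr rfl fun p _ => hcst p, ← Finset.mul_sum, ← Finset.mul_sum]
            ring
    rw [h1, h1']
    calc (∑ x : Fin n × Fin nd, A x.1 q x.2 * (b x.2 (z x.1) - b x.2 (z' x.1))) ^ 2
        ≤ (∑ x : Fin n × Fin nd, A x.1 q x.2 ^ 2) *
            (∑ x : Fin n × Fin nd, (b x.2 (z x.1) - b x.2 (z' x.1)) ^ 2) := hcs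
      _ ≤ _ := mul_le_mul_of_nonneg_left h2 (by positivity)
  calc ∑ q, (∑ p, ∑ k, A p q k * (b k (z p) - b k (z' p))) ^ 2
      ≤ ∑ q, (∑ p, ∑ k, A p q k ^ 2) * (K ^ 2 * (nd : ℝ) * (∑ p, (z p - z' p) ^ 2)) :=
        Finset.sum_le_sum fun q _ => keyq q
    _ = K ^ 2 * (nd : ℝ) * (∑ p, ∑ q, ∑ k, A p q k ^ 2) * (∑ p, (z p - z' p) ^ 2) := by
        rw [← Finset.sum_mul, Finset.sum_comm]
        ring

lemma rec_bound (C : ℝ) (hC : 0 ≤ C) (e c : ℕ → ℝ) (he0 : e 0 = 0) :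
    ∀ L : ℕ, (∀ ℓ < L, e (ℓ + 1) ≤ C * e ℓ + c ℓ) →
      e L ≤ ∑ ℓ ∈ Finset.range L, C ^ (L - 1 - ℓ) * c ℓ := by
  intro L
  induction L with
  | zero => intro _; simp [he0]
  | succ L ih =>
    intro hstep
    have hL := hstep L (by omega)
    have hIH := ih (fun ℓ hℓ => hstep ℓ (by omega))
    have h2 : e (L + 1) ≤ C * (∑ ℓ ∈ Finset.range L, C ^ (L - 1 - ℓ) * c ℓ) + c L := by
      refine hL.trans ?_
      have := mul_le_mul_of_nonneg_left hIH hC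
      linarith
    refine h2.trans ?_
    rw [Finset.sum_range_succ, Finset.mul_sum]
    apply add_le_add
    · apply le_of_eq
      refine Finset.sum_congr rfl fun ℓ hℓ => ?_
      have hl := Finset.mem_range.mp hℓ
      have h3 : L - 1 - ℓ + 1 = L - ℓ := by omega
      rw [show (L + 1 - 1 - ℓ) = L - ℓ by omega, ← h3, pow_succ]
      ring
    · apply le_of_eq
      rw [show (L + 1 - 1 - L) = 0 by omega]
      ring

lemma frob3_eq_sqrt_ip {n1 n2 n3 : ℕ} (T : Fin n1 → Fin n2 → Fin n3 → ℝ) :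
    frob3 T = Real.sqrt (ip T T) := by
  rw [frob3, ip]
  congr 1
  refine Finset.sum_congr rfl fun p _ => Finset.sum_congr rfl fun q _ =>
    Finset.sum_congr rfl fun k _ => (sq (T p q k)).symm ▸ by ring


/-- **Theorem 1 (Expressiveness of LoTRA).**  For an `L`-layer KAN whose basis
functions are bounded by `B > 0` and `K`-Lipschitz (`K > 0`), and target/pre-trained
parameter tensors bounded in Frobenius norm by `M` for all layers `ℓ < L`, with fixed
Tucker ranks `r1 ℓ ≤ n ℓ`, `r2 ℓ ≤ n (ℓ+1)`, `r3 ℓ ≤ n_d`, there exists a LoTRA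
fine-tuned model `A_ft ℓ = A_pt ℓ + G ℓ ×₁ U1 ℓ ×₂ U2 ℓ ×₃ U3 ℓ` such that for every
input `x`,
`‖Ψ_ft(x) − Ψ_tg(x)‖₂ ≤ Σ_{ℓ<L} (M K √n_d)^{L−1−ℓ} B √(n_ℓ n_d) ·
  (tail sums of squared singular values of the unfoldings of E_ℓ = A_tg ℓ − A_pt ℓ)^{1/2}`.
(Layers and singular-value indices are 0-based.) -/
theorem lotra_expressiveness {nd L : ℕ} (b : Fin nd → ℝ → ℝ) (B K M : ℝ)
    (hB : 0 < B) (hK : 0 < K)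
    (hbound : ∀ (k : Fin nd) (t : ℝ), |b k t| ≤ B)
    (hlip : ∀ (k : Fin nd) (s t : ℝ), |b k s - b k t| ≤ K * |s - t|)
    (n : ℕ → ℕ)
    (Atg Apt : ∀ ℓ : ℕ, Fin (n ℓ) → Fin (n (ℓ + 1)) → Fin nd → ℝ)
    (hMtg : ∀ ℓ < L, frob3 (Atg ℓ) ≤ M) (hMpt : ∀ ℓ < L, frob3 (Apt ℓ) ≤ M)
    (r1 r2 r3 : ℕ → ℕ)
    (hr1 : ∀ ℓ < L, r1 ℓ ≤ n ℓ) (hr2 : ∀ ℓ < L, r2 ℓ ≤ n (ℓ + 1))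
    (hr3 : ∀ ℓ < L, r3 ℓ ≤ nd) :
    ∃ (G : ∀ ℓ : ℕ, Fin (r1 ℓ) → Fin (r2 ℓ) → Fin (r3 ℓ) → ℝ)
      (U1 : ∀ ℓ : ℕ, Matrix (Fin (n ℓ)) (Fin (r1 ℓ)) ℝ)
      (U2 : ∀ ℓ : ℕ, Matrix (Fin (n (ℓ + 1))) (Fin (r2 ℓ)) ℝ)
      (U3 : ∀ ℓ : ℕ, Matrix (Fin nd) (Fin (r3 ℓ)) ℝ),
      ∀ x : Fin (n 0) → ℝ,
        _root_.enorm (fun j =>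
            kanForward b n
              (fun ℓ p q k => Apt ℓ p q k + tucker (G ℓ) (U1 ℓ) (U2 ℓ) (U3 ℓ) p q k)
              L x j
          - kanForward b n Atg L x j) ≤
        ∑ ℓ : Fin L,
          (M * K * Real.sqrt (nd : ℝ)) ^ (L - 1 - (ℓ : ℕ)) *
            (B * Real.sqrt ((n ℓ : ℝ) * (nd : ℝ))) *
            Real.sqrt
              ((∑ r ∈ Finset.univ.filter (fun r : Fin (n ℓ) => r1 ℓ ≤ (r : ℕ)),
                  sval (unfold1 (fun p q k => Atg ℓ p q k - Apt ℓ p q k)) r ^ 2) +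
               (∑ r ∈ Finset.univ.filter (fun r : Fin (n (ℓ + 1)) => r2 ℓ ≤ (r : ℕ)),
                  sval (unfold2 (fun p q k => Atg ℓ p q k - Apt ℓ p q k)) r ^ 2) +
               (∑ r ∈ Finset.univ.filter (fun r : Fin nd => r3 ℓ ≤ (r : ℕ)),
                  sval (unfold3 (fun p q k => Atg ℓ p q k - Apt ℓ p q k)) r ^ 2)) := by
  classical
  -- the tail-sum bound for each layer, as a function of ℓ
  set tails : ℕ → ℝ := fun ℓ =>
      (∑ r ∈ Finset.univ.filter (fun r : Fin (n ℓ) => r1 ℓ ≤ (r : ℕ)),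
          sval (unfold1 (fun p q k => Atg ℓ p q k - Apt ℓ p q k)) r ^ 2) +
      (∑ r ∈ Finset.univ.filter (fun r : Fin (n (ℓ + 1)) => r2 ℓ ≤ (r : ℕ)),
          sval (unfold2 (fun p q k => Atg ℓ p q k - Apt ℓ p q k)) r ^ 2) +
      (∑ r ∈ Finset.univ.filter (fun r : Fin nd => r3 ℓ ≤ (r : ℕ)),
          sval (unfold3 (fun p q k => Atg ℓ p q k - Apt ℓ p q k)) r ^ 2) with htails
  have key : ∀ ℓ : ℕ, ∃ (G : Fin (r1 ℓ) → Fin (r2 ℓ) → Fin (r3 ℓ) → ℝ)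
      (U1 : Matrix (Fin (n ℓ)) (Fin (r1 ℓ)) ℝ)
      (U2 : Matrix (Fin (n (ℓ + 1))) (Fin (r2 ℓ)) ℝ)
      (U3 : Matrix (Fin nd) (Fin (r3 ℓ)) ℝ),
      ℓ < L →
        ip ((fun p q k => Atg ℓ p q k - Apt ℓ p q k) - tucker G U1 U2 U3)
           ((fun p q k => Atg ℓ p q k - Apt ℓ p q k) - tucker G U1 U2 U3) ≤ tails ℓ := by
    intro ℓ
    by_cases hℓ : ℓ < L
    · obtain ⟨G, U1, U2, U3, h⟩ := tucker_exists
        (fun p q k => Atg ℓ p q k - Apt ℓ p q k) (hr1 ℓ hℓ) (hr2 ℓ hℓ) (hr3 ℓ hℓ)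
      exact ⟨G, U1, U2, U3, fun _ => h⟩
    · exact ⟨fun _ _ _ => 0, 0, 0, 0, fun h => absurd h hℓ⟩
  choose G U1 U2 U3 hG using key
  refine ⟨G, U1, U2, U3, ?_⟩
  intro x
  set Aft : ∀ ℓ : ℕ, Fin (n ℓ) → Fin (n (ℓ + 1)) → Fin nd → ℝ :=
    fun ℓ p q k => Apt ℓ p q k + tucker (G ℓ) (U1 ℓ) (U2 ℓ) (U3 ℓ) p q k with hAft
  have he0 : _root_.enorm (fun j => kanForward b n Aft 0 x j - kanForward b n Atg 0 x j) = 0 := by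
    have hz : (fun j => kanForward b n Aft 0 x j - kanForward b n Atg 0 x j)
        = fun j => x j - x j := rfl
    rw [hz]
    simp [_root_.enorm]
  rcases Nat.eq_zero_or_pos L with hL0 | hLpos
  · subst hL0
    rw [he0]
    simp
  have hM0 : 0 ≤ M := le_trans (frob3_nonneg (Atg 0)) (hMtg 0 hLpos)
  set C : ℝ := M * K * Real.sqrt (nd : ℝ) with hCdef
  have hC : 0 ≤ C := by
    rw [hCdef]
    exact mul_nonneg (mul_nonneg hM0 hK.le) (Real.sqrt_nonneg _)
  have hstep : ∀ ℓ < L,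
      _root_.enorm (fun j => kanForward b n Aft (ℓ + 1) x j - kanForward b n Atg (ℓ + 1) x j)
      ≤ C * _root_.enorm (fun j => kanForward b n Aft ℓ x j - kanForward b n Atg ℓ x j)
        + B * Real.sqrt ((n ℓ : ℝ) * (nd : ℝ)) * Real.sqrt (tails ℓ) := by
    intro ℓ hℓ
    set zft := kanForward b n Aft ℓ x with hzft
    set ztg := kanForward b n Atg ℓ x with hztg
    have hkf : (fun j => kanForward b n Aft (ℓ + 1) x j - kanForward b n Atg (ℓ + 1) x j)
        = fun j => kanLayer b (Aft ℓ) zft j - kanLayer b (Atg ℓ) ztg j := rfl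
    have hsplit : ∀ j, kanLayer b (Aft ℓ) zft j - kanLayer b (Atg ℓ) ztg j
        = (∑ p, ∑ k, (Aft ℓ p j k - Atg ℓ p j k) * b k (zft p))
          + (∑ p, ∑ k, Atg ℓ p j k * (b k (zft p) - b k (ztg p))) := by
      intro j
      rw [kanLayer, kanLayer, ← Finset.sum_sub_distrib, ← Finset.sum_add_distrib]
      refine Finset.sum_congr rfl fun p _ => ?_
      rw [← Finset.sum_sub_distrib, ← Finset.sum_add_distrib]
      exact Finset.sum_congr rfl fun k _ => by ring
    rw [hkf, funext hsplit]
    have htri := enorm_add_le_r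
      (fun j => ∑ p, ∑ k, (Aft ℓ p j k - Atg ℓ p j k) * b k (zft p))
      (fun j => ∑ p, ∑ k, Atg ℓ p j k * (b k (zft p) - b k (ztg p)))
    refine htri.trans ?_
    have hb1 := layer_bound1 b B hB.le hbound
      (fun p q k => Aft ℓ p q k - Atg ℓ p q k) zft
    have hb2 := layer_bound2 b K hK.le hlip (Atg ℓ) zft ztg
    have hfr : frob3 (fun p q k => Aft ℓ p q k - Atg ℓ p q k) ≤ Real.sqrt (tails ℓ) := by
      have heq : frob3 (fun p q k => Aft ℓ p q k - Atg ℓ p q k)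
          = frob3 ((fun p q k => Atg ℓ p q k - Apt ℓ p q k)
              - tucker (G ℓ) (U1 ℓ) (U2 ℓ) (U3 ℓ)) := by
        rw [frob3, frob3]
        congr 1
        refine Finset.sum_congr rfl fun p _ => Finset.sum_congr rfl fun q _ =>
          Finset.sum_congr rfl fun k _ => ?_
        simp only [hAft, Pi.sub_apply]
        ring
      rw [heq, frob3_eq_sqrt_ip]
      exact Real.sqrt_le_sqrt (hG ℓ hℓ)
    have ht1 : _root_.enorm (fun j => ∑ p, ∑ k, (Aft ℓ p j k - Atg ℓ p j k) * b k (zft p))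
        ≤ B * Real.sqrt ((n ℓ : ℝ) * (nd : ℝ)) * Real.sqrt (tails ℓ) := by
      refine hb1.trans ?_
      exact mul_le_mul_of_nonneg_left hfr
        (mul_nonneg hB.le (Real.sqrt_nonneg _))
    have ht2 : _root_.enorm (fun j => ∑ p, ∑ k, Atg ℓ p j k * (b k (zft p) - b k (ztg p)))
        ≤ C * _root_.enorm (fun j => zft j - ztg j) := by
      refine hb2.trans ?_
      have h1 : K * Real.sqrt (nd : ℝ) * frob3 (Atg ℓ) * _root_.enorm (fun p => zft p - ztg p)
          ≤ K * Real.sqrt (nd : ℝ) * M * _root_.enorm (fun p => zft p - ztg p) := by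
        apply mul_le_mul_of_nonneg_right _ (enorm_nonneg' _)
        exact mul_le_mul_of_nonneg_left (hMtg ℓ hℓ)
          (mul_nonneg hK.le (Real.sqrt_nonneg _))
      refine h1.trans (le_of_eq (by rw [hCdef]; ring))
    have hfin := add_le_add ht1 ht2
    refine hfin.trans (le_of_eq (by ring))
  have hrec := rec_bound C hC
    (fun ℓ => _root_.enorm (fun j => kanForward b n Aft ℓ x j - kanForward b n Atg ℓ x j))
    (fun ℓ => B * Real.sqrt ((n ℓ : ℝ) * (nd : ℝ)) * Real.sqrt (tails ℓ))
    he0 L hstep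
  refine hrec.trans (le_of_eq ?_)
  rw [← Fin.sum_univ_eq_sum_range
    (fun ℓ => C ^ (L - 1 - ℓ) * (B * Real.sqrt ((n ℓ : ℝ) * (nd : ℝ)) * Real.sqrt (tails ℓ))) L]
  refine Finset.sum_congr rfl fun ℓ _ => ?_
  simp only [htails, hCdef]
  ring
end
end

section
/- Suppose each basis function b_k : ℝ → ℝ (k = 1,…,n_d) satisfies |b_k(t)| ≤ B for all t ∈ ℝ. Let A_pt, A_tg ∈ ℝ^{n×m×n_d}, set E = A_tg − A_pt, and fix ranks r1 ≤ n, r2 ≤ m, r3 ≤ n_d. Then there exist G ∈ ℝ^{r1×r2×r3} and matrices U^{(1)} ∈ ℝ^{n×r1}, U^{(2)} ∈ ℝ^{m×r2}, U^{(3)} ∈ ℝ^{n_d×r3} such that, with A_ft = A_pt + G ×₁ U^{(1)} ×₂ U^{(2)} ×₃ U^{(3)}, for every z ∈ ℝ^n: ‖Φ(z;A_ft) − Φ(z;A_tg)‖₂ ≤ B √(n · n_d) · ( Σ_{r=r1+1}^{n} σ_r(E^{(1)})² + Σ_{r=r2+1}^{m} σ_r(E^{(2)})² + Σ_{r=r3+1}^{n_d}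 σ_r(E^{(3)})² )^{1/2}. -/
noncomputable section
open Finset Matrix

/-- Euclidean norm of a finitely-indexed real vector. -/
def euclNorm {ι : Type*} [Fintype ι] (x : ι → ℝ) : ℝ :=
  Real.sqrt (∑ i, x i ^ 2)

namespace LotraAux

def frobSq {α β : Type*} [Fintype α] [Fintype β] (M : Matrix α β ℝ) : ℝ :=
  ∑ i, ∑ j, M i j ^ 2

lemma frobSq_nonneg {α β : Type*} [Fintype α] [Fintype β] (M : Matrix α β ℝ) :
    0 ≤ frobSq M :=
  Finset.sum_nonneg fun _ _ => Finset.sum_nonneg fun _ _ => sq_nonneg _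

lemma frobSq_eq_trace {α β : Type*} [Fintype α] [Fintype β] (M : Matrix α β ℝ) :
    frobSq M = Matrix.trace (Mᵀ * M) := by
  simp only [frobSq, Matrix.trace, Matrix.diag_apply, Matrix.mul_apply,
    Matrix.transpose_apply, sq]
  exact Finset.sum_comm

variable {N r : ℕ} {ι : Type*} [Fintype ι]

lemma pyth (U : Matrix (Fin N) (Fin r) ℝ) (hU : Uᵀ * U = 1)
    (X Y : Matrix (Fin N) ι ℝ) :
    frobSq (X - U * Uᵀ * X + U * Uᵀ * Y) =
      frobSq (X - U * Uᵀ * X) + frobSq (U * Uᵀ * Y) := by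
  have hPP : (U * Uᵀ) * (U * Uᵀ) = U * Uᵀ := by
    rw [Matrix.mul_assoc U Uᵀ (U * Uᵀ), ← Matrix.mul_assoc Uᵀ U Uᵀ, hU, Matrix.one_mul]
  have hcross : (X - U * Uᵀ * X)ᵀ * (U * Uᵀ * Y) = 0 := by
    rw [Matrix.transpose_sub, Matrix.sub_mul, sub_eq_zero, Matrix.transpose_mul,
      Matrix.transpose_mul, Matrix.transpose_transpose]
    rw [Matrix.mul_assoc Xᵀ (U * Uᵀ) (U * Uᵀ * Y), ← Matrix.mul_assoc (U * Uᵀ) (U * Uᵀ) Y,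
      hPP]
  have hBA : (U * Uᵀ * Y)ᵀ * (X - U * Uᵀ * X) = 0 := by
    have h2 := congrArg Matrix.transpose hcross
    simpa [Matrix.transpose_mul] using h2
  rw [frobSq_eq_trace, frobSq_eq_trace (X - U * Uᵀ * X), frobSq_eq_trace (U * Uᵀ * Y),
    Matrix.transpose_add, Matrix.add_mul, Matrix.mul_add, Matrix.mul_add, hcross, hBA]
  simp [Matrix.trace_add]

lemma contr (U : Matrix (Fin N) (Fin r) ℝ) (hU : Uᵀ * U = 1)
    (Y : Matrix (Fin N) ι ℝ) : frobSq (U * Uᵀ * Y) ≤ frobSq Y := by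
  have h := pyth U hU Y Y
  rw [sub_add_cancel] at h
  have h2 := frobSq_nonneg (Y - U * Uᵀ * Y)
  linarith


lemma parseval {N : ℕ} (w : Fin N → Fin N → ℝ)
    (hw : ∀ c c', (∑ i, w c i * w c' i) = if c = c' then (1:ℝ) else 0)
    (S : Finset (Fin N)) (f : Fin N → ℝ) :
    ∑ i, (∑ c ∈ S, f c * w c i) ^ 2 = ∑ c ∈ S, f c ^ 2 := by
  have h1 : ∀ i : Fin N, (∑ c ∈ S, f c * w c i) ^ 2
      = ∑ c ∈ S, ∑ c' ∈ S, f c * f c' * (w c i * w c' i) := by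
    intro i
    rw [sq, Finset.sum_mul_sum]
    exact Finset.sum_congr rfl fun c _ => Finset.sum_congr rfl fun c' _ => by ring
  simp only [h1]
  rw [Finset.sum_comm]
  have h2 : ∀ c ∈ S, (∑ i, ∑ c' ∈ S, f c * f c' * (w c i * w c' i)) = f c ^ 2 := by
    intro c hc
    rw [Finset.sum_comm]
    have h3 : ∀ c' ∈ S, (∑ i, f c * f c' * (w c i * w c' i))
        = f c * f c' * (if c = c' then (1:ℝ) else 0) := by
      intro c' _
      rw [← Finset.mul_sum, hw]
    rw [Finset.sum_congr rfl h3]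
    simp only [mul_ite, mul_one, mul_zero]
    rw [Finset.sum_ite_eq S c (fun c' => f c * f c')]
    simp [hc, sq]
  rw [Finset.sum_congr rfl h2]

lemma core {N : ℕ} {ι : Type*} [Fintype ι] (M : Matrix (Fin N) ι ℝ) (r : ℕ) (hr : r ≤ N) :
    ∃ U : Matrix (Fin N) (Fin r) ℝ, Uᵀ * U = 1 ∧
      frobSq (M - U * Uᵀ * M) ≤
        ∑ q ∈ Finset.univ.filter (fun q : Fin N => r ≤ (q : ℕ)), sval M q ^ 2 := by
  classical
  set h := Matrix.isHermitian_mul_conjTranspose_self M with hh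
  set ev : Fin N → ℝ := h.eigenvalues with hev
  set s : Equiv.Perm (Fin N) := Tuple.sort ev with hs
  set w : Fin N → Fin N → ℝ := fun c => ⇑(h.eigenvectorBasis c) with hwdef
  have hw : ∀ c c', (∑ i, w c i * w c' i) = if c = c' then (1:ℝ) else 0 := by
    intro c c'
    have h0 := orthonormal_iff_ite.mp h.eigenvectorBasis.orthonormal c c'
    simp only [PiLp.inner_apply, RCLike.inner_apply, starRingEnd_apply, star_trivial] at h0
    simpa [hwdef, mul_comm] using h0
  have hmv : ∀ c, (M * Mᴴ) *ᵥ (w c) = ev c • (w c) := fun c => h.mulVec_eigenvectorBasis c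
  have hevnn : ∀ c, 0 ≤ ev c := fun c =>
    Matrix.eigenvalues_self_mul_conjTranspose_nonneg M c
  have hNr : ∀ a : Fin r, N - r + (a : ℕ) < N := fun a => by omega
  set ι0 : Fin r → Fin N := fun a => s ⟨N - r + a, hNr a⟩ with hι0
  have hinj : Function.Injective ι0 := by
    intro a a' hx
    have h2 := congrArg Fin.val (s.injective hx)
    simp only at h2
    exact Fin.ext (by omega)
  set U : Matrix (Fin N) (Fin r) ℝ := Matrix.of (fun i a => w (ι0 a) i) with hUdef
  have hU : Uᵀ * U = 1 := by
    ext a a'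
    simp only [Matrix.mul_apply, Matrix.transpose_apply, hUdef, Matrix.of_apply,
      Matrix.one_apply]
    rw [hw]
    simp [hinj.eq_iff]
  refine ⟨U, hU, ?_⟩
  set α : Fin N → ι → ℝ := fun c j => ∑ i, M i j * w c i with hα
  have hww : ∀ i i', (∑ c, w c i * w c i') = if i = i' then (1:ℝ) else 0 := by
    have hWWt : (Matrix.of fun i c => w c i) * (Matrix.of fun i c => w c i)ᵀ = 1 := by
      rw [mul_eq_one_comm]
      ext c c'
      simp only [Matrix.mul_apply, Matrix.transpose_apply, Matrix.of_apply, Matrix.one_apply]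
      rw [hw]
    intro i i'
    have h3 := congrFun (congrFun hWWt i) i'
    simpa [Matrix.mul_apply, Matrix.one_apply] using h3
  have hexp : ∀ i j, M i j = ∑ c, α c j * w c i := by
    intro i j
    have h1 : ∀ c, α c j * w c i = ∑ i', M i' j * (w c i' * w c i) := by
      intro c
      simp only [hα, Finset.sum_mul]
      exact Finset.sum_congr rfl fun i' _ => by ring
    simp only [h1]
    rw [Finset.sum_comm]
    have h2 : ∀ i', (∑ c, M i' j * (w c i' * w c i)) = M i' j * if i' = i then (1:ℝ) else 0 := by
      intro i'
      rw [← Finset.mul_sum, hww]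
    rw [Finset.sum_congr rfl fun i' _ => h2 i']
    simp
  set K : Finset (Fin N) := Finset.image ι0 Finset.univ with hK
  have hres : ∀ i j, (M - U * Uᵀ * M) i j = ∑ c ∈ Finset.univ \ K, α c j * w c i := by
    intro i j
    have hP : (U * Uᵀ * M) i j = ∑ c ∈ K, α c j * w c i := by
      rw [Matrix.mul_assoc, Matrix.mul_apply]
      rw [hK, Finset.sum_image (fun a _ a' _ hx => hinj hx)]
      refine Finset.sum_congr rfl fun a _ => ?_
      simp only [hUdef, Matrix.of_apply, Matrix.mul_apply, Matrix.transpose_apply, hα]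
      have h6 : (∑ x, w (ι0 a) x * M x j) = ∑ x, M x j * w (ι0 a) x :=
        Finset.sum_congr rfl fun x _ => mul_comm _ _
      rw [h6, mul_comm]
    rw [Matrix.sub_apply, hP, Finset.sum_sdiff_eq_sub (Finset.subset_univ K)]
    rw [← hexp i j]
  have hcol : ∀ c, (∑ j, α c j ^ 2) = ev c := by
    intro c
    have h1 : (∑ j, α c j ^ 2) = ∑ i, w c i * (((M * Mᴴ) *ᵥ w c) i) := by
      have hA : ∀ i, (((M * Mᴴ) *ᵥ w c) i) = ∑ i', ∑ j, M i j * M i' j * w c i' := by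
        intro i
        simp only [Matrix.mulVec, dotProduct, Matrix.mul_apply, Matrix.conjTranspose_apply,
          star_trivial]
        exact Finset.sum_congr rfl fun i' _ => by rw [Finset.sum_mul]
      simp only [hA]
      have hL : ∀ j, α c j ^ 2 = ∑ i, ∑ i', (M i j * w c i) * (M i' j * w c i') := by
        intro j
        rw [hα, sq, Finset.sum_mul_sum]
      simp only [hL]
      rw [Finset.sum_comm]
      refine Finset.sum_congr rfl fun i _ => ?_
      rw [Finset.mul_sum, Finset.sum_comm]
      refine Finset.sum_congr rfl fun i' _ => ?_
      rw [Finset.mul_sum]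
      refine Finset.sum_congr rfl fun j _ => by ring
    rw [h1, hmv]
    simp only [Pi.smul_apply, smul_eq_mul]
    have h2 := hw c c
    rw [if_pos rfl] at h2
    calc ∑ i, w c i * (ev c * w c i) = ev c * ∑ i, w c i * w c i := by
          rw [Finset.mul_sum]; exact Finset.sum_congr rfl fun i _ => by ring
    _ = ev c := by rw [h2, mul_one]
  have hfr : frobSq (M - U * Uᵀ * M) = ∑ c ∈ Finset.univ \ K, ev c := by
    rw [frobSq, Finset.sum_comm]
    have h1 : ∀ j : ι, (∑ i, (M - U * Uᵀ * M) i j ^ 2) = ∑ c ∈ Finset.univ \ K, α c j ^ 2 := by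
      intro j
      have h2 : ∀ i, (M - U * Uᵀ * M) i j = ∑ c ∈ Finset.univ \ K, α c j * w c i :=
        fun i => hres i j
      simp only [h2]
      exact parseval w hw _ _
    rw [Finset.sum_congr rfl fun j _ => h1 j, Finset.sum_comm]
    exact Finset.sum_congr rfl fun c _ => hcol c
  have hq0 : ∀ q : Fin N, sval M q ^ 2 = ev (s q.rev) := fun q => Real.sq_sqrt (hevnn _)
  have hrev : (∑ q ∈ Finset.univ.filter (fun q : Fin N => r ≤ (q : ℕ)), ev (s q.rev))
      = ∑ c ∈ Finset.univ.filter (fun c : Fin N => (c : ℕ) < N - r), ev (s c) := by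
    refine Finset.sum_bij' (fun q _ => q.rev) (fun c _ => c.rev) ?_ ?_ ?_ ?_ ?_
    · intro q hq
      simp only [Finset.mem_filter, Finset.mem_univ, true_and] at hq ⊢
      have := q.isLt
      rw [Fin.val_rev]
      omega
    · intro c hc
      simp only [Finset.mem_filter, Finset.mem_univ, true_and] at hc ⊢
      have := c.isLt
      rw [Fin.val_rev]
      omega
    · intro q _; exact Fin.rev_rev q
    · intro c _; exact Fin.rev_rev c
    · intro q _; rfl
  have h4 : (∑ c ∈ Finset.univ.filter (fun c : Fin N => ¬ (c : ℕ) < N - r), ev (s c))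
      = ∑ a : Fin r, ev (ι0 a) := by
    refine Finset.sum_bij' (fun (c : Fin N) (hc : c ∈ Finset.univ.filter
        (fun c : Fin N => ¬ (c : ℕ) < N - r)) => (⟨(c : ℕ) - (N - r), by
          simp only [Finset.mem_filter, Finset.mem_univ, true_and] at hc
          have := c.isLt
          omega⟩ : Fin r))
      (fun a _ => (⟨N - r + (a : ℕ), hNr a⟩ : Fin N)) ?_ ?_ ?_ ?_ ?_
    · intro c hc; exact Finset.mem_univ _
    · intro a _
      simp only [Finset.mem_filter, Finset.mem_univ, true_and]
      omega
    · intro c hc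
      simp only [Finset.mem_filter, Finset.mem_univ, true_and] at hc
      exact Fin.ext (by simp only [Fin.val_mk]; omega)
    · intro a _
      exact Fin.ext (by simp only [Fin.val_mk]; omega)
    · intro c hc
      simp only [Finset.mem_filter, Finset.mem_univ, true_and] at hc
      simp only [hι0]
      congr 2
      exact Fin.ext (by simp only [Fin.val_mk]; have := c.isLt; omega)
  have hKsum : (∑ c ∈ K, ev c) = ∑ a : Fin r, ev (ι0 a) := by
    rw [hK, Finset.sum_image (fun a _ a' _ hx => hinj hx)]
  have hsplit : (∑ c ∈ Finset.univ \ K, ev c)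
      = ∑ c ∈ Finset.univ.filter (fun c : Fin N => (c : ℕ) < N - r), ev (s c) := by
    rw [Finset.sum_sdiff_eq_sub (Finset.subset_univ K), hKsum]
    have h5 : (∑ c : Fin N, ev c) = ∑ c : Fin N, ev (s c) := (Equiv.sum_comp s ev).symm
    rw [h5, ← Finset.sum_filter_add_sum_filter_not Finset.univ
      (fun c : Fin N => (c : ℕ) < N - r) (fun c => ev (s c)), h4]
    ring
  rw [hfr, hsplit, ← hrev]
  exact le_of_eq (Finset.sum_congr rfl fun q _ => (hq0 q).symm)

section Tensor

variable {n m nd : ℕ}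

def tfrob (X : Fin n → Fin m → Fin nd → ℝ) : ℝ := ∑ p, ∑ q, ∑ k, X p q k ^ 2

lemma tfrob_nonneg (X : Fin n → Fin m → Fin nd → ℝ) : 0 ≤ tfrob X :=
  Finset.sum_nonneg fun _ _ => Finset.sum_nonneg fun _ _ =>
    Finset.sum_nonneg fun _ _ => sq_nonneg _

def m1 {n' : ℕ} (P : Matrix (Fin n') (Fin n) ℝ) (X : Fin n → Fin m → Fin nd → ℝ) :
    Fin n' → Fin m → Fin nd → ℝ := fun p q k => ∑ p', P p p' * X p' q k

def m2 {m' : ℕ} (P : Matrix (Fin m') (Fin m) ℝ) (X : Fin n → Fin m → Fin nd → ℝ) :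
    Fin n → Fin m' → Fin nd → ℝ := fun p q k => ∑ q', P q q' * X p q' k

def m3 {nd' : ℕ} (P : Matrix (Fin nd') (Fin nd) ℝ) (X : Fin n → Fin m → Fin nd → ℝ) :
    Fin n → Fin m → Fin nd' → ℝ := fun p q k => ∑ k', P k k' * X p q k'

def sw12 (X : Fin n → Fin m → Fin nd → ℝ) : Fin m → Fin n → Fin nd → ℝ := fun q p k => X p q k

def sw13 (X : Fin n → Fin m → Fin nd → ℝ) : Fin nd → Fin m → Fin n → ℝ := fun k q p => X p q k

lemma tfrob_eq (X : Fin n → Fin m → Fin nd → ℝ) : tfrob X = frobSq (unfold1 X) := by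
  simp [tfrob, frobSq, unfold1, Fintype.sum_prod_type]

lemma tfrob_sw12 (X : Fin n → Fin m → Fin nd → ℝ) : tfrob (sw12 X) = tfrob X :=
  Finset.sum_comm

lemma tfrob_sw13 (X : Fin n → Fin m → Fin nd → ℝ) : tfrob (sw13 X) = tfrob X := by
  rw [tfrob, tfrob]
  calc (∑ k, ∑ q, ∑ p, X p q k ^ 2) = ∑ k, ∑ p, ∑ q, X p q k ^ 2 :=
        Finset.sum_congr rfl fun k _ => Finset.sum_comm
  _ = ∑ p, ∑ k, ∑ q, X p q k ^ 2 := Finset.sum_comm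
  _ = ∑ p, ∑ q, ∑ k, X p q k ^ 2 := Finset.sum_congr rfl fun p _ => Finset.sum_comm

lemma unfold1_m1 {n' : ℕ} (P : Matrix (Fin n') (Fin n) ℝ) (X : Fin n → Fin m → Fin nd → ℝ) :
    unfold1 (m1 P X) = P * unfold1 X := by
  ext p qk
  simp [unfold1, m1, Matrix.mul_apply]

lemma tpyth {r : ℕ} (U : Matrix (Fin n) (Fin r) ℝ) (hU : Uᵀ * U = 1)
    (X Y : Fin n → Fin m → Fin nd → ℝ) :
    tfrob (fun p q k => (X p q k - m1 (U * Uᵀ) X p q k) + m1 (U * Uᵀ) Y p q k)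
      = tfrob (fun p q k => X p q k - m1 (U * Uᵀ) X p q k)
        + tfrob (fun p q k => m1 (U * Uᵀ) Y p q k) := by
  have h := pyth U hU (unfold1 X) (unfold1 Y)
  rw [tfrob_eq, tfrob_eq, tfrob_eq]
  have e1 : unfold1 (fun p q k => (X p q k - m1 (U * Uᵀ) X p q k) + m1 (U * Uᵀ) Y p q k)
      = unfold1 X - (U * Uᵀ) * unfold1 X + (U * Uᵀ) * unfold1 Y := by
    ext p qk
    simp [unfold1, m1, Matrix.mul_apply, Matrix.sub_apply, Matrix.add_apply]
  have e2 : unfold1 (fun p q k => X p q k - m1 (U * Uᵀ) X p q k)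
      = unfold1 X - (U * Uᵀ) * unfold1 X := by
    ext p qk
    simp [unfold1, m1, Matrix.mul_apply, Matrix.sub_apply]
  have e3 : unfold1 (fun p q k => m1 (U * Uᵀ) Y p q k)
      = (U * Uᵀ) * unfold1 Y := by
    ext p qk
    simp [unfold1, m1, Matrix.mul_apply]
  rw [e1, e2, e3]
  exact h

lemma tcontr {r : ℕ} (U : Matrix (Fin n) (Fin r) ℝ) (hU : Uᵀ * U = 1)
    (Y : Fin n → Fin m → Fin nd → ℝ) :
    tfrob (fun p q k => m1 (U * Uᵀ) Y p q k) ≤ tfrob Y := by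
  rw [tfrob_eq, tfrob_eq]
  have e3 : unfold1 (fun p q k => m1 (U * Uᵀ) Y p q k) = (U * Uᵀ) * unfold1 Y := by
    ext p qk
    simp [unfold1, m1, Matrix.mul_apply]
  rw [e3]
  exact contr U hU (unfold1 Y)

lemma m1_m1 {n' n'' : ℕ} (A : Matrix (Fin n'') (Fin n') ℝ) (B : Matrix (Fin n') (Fin n) ℝ)
    (X : Fin n → Fin m → Fin nd → ℝ) : m1 A (m1 B X) = m1 (A * B) X := by
  funext p q k
  simp only [m1, Matrix.mul_apply, Finset.mul_sum, Finset.sum_mul]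
  rw [Finset.sum_comm]
  exact Finset.sum_congr rfl fun _ _ => Finset.sum_congr rfl fun _ _ => by ring

lemma m2_m2 {m' m'' : ℕ} (A : Matrix (Fin m'') (Fin m') ℝ) (B : Matrix (Fin m') (Fin m) ℝ)
    (X : Fin n → Fin m → Fin nd → ℝ) : m2 A (m2 B X) = m2 (A * B) X := by
  funext p q k
  simp only [m2, Matrix.mul_apply, Finset.mul_sum, Finset.sum_mul]
  rw [Finset.sum_comm]
  exact Finset.sum_congr rfl fun _ _ => Finset.sum_congr rfl fun _ _ => by ring

lemma m3_m3 {k' k'' : ℕ} (A : Matrix (Fin k'') (Fin k') ℝ) (B : Matrix (Fin k') (Fin nd) ℝ)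
    (X : Fin n → Fin m → Fin nd → ℝ) : m3 A (m3 B X) = m3 (A * B) X := by
  funext p q k
  simp only [m3, Matrix.mul_apply, Finset.mul_sum, Finset.sum_mul]
  rw [Finset.sum_comm]
  exact Finset.sum_congr rfl fun _ _ => Finset.sum_congr rfl fun _ _ => by ring

lemma m2_m1 {n' m' : ℕ} (B : Matrix (Fin m') (Fin m) ℝ) (A : Matrix (Fin n') (Fin n) ℝ)
    (X : Fin n → Fin m → Fin nd → ℝ) : m2 B (m1 A X) = m1 A (m2 B X) := by
  funext p q k
  simp only [m1, m2, Finset.mul_sum]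
  rw [Finset.sum_comm]
  exact Finset.sum_congr rfl fun _ _ => Finset.sum_congr rfl fun _ _ => by ring

lemma m3_m1 {n' k' : ℕ} (C : Matrix (Fin k') (Fin nd) ℝ) (A : Matrix (Fin n') (Fin n) ℝ)
    (X : Fin n → Fin m → Fin nd → ℝ) : m3 C (m1 A X) = m1 A (m3 C X) := by
  funext p q k
  simp only [m1, m3, Finset.mul_sum]
  rw [Finset.sum_comm]
  exact Finset.sum_congr rfl fun _ _ => Finset.sum_congr rfl fun _ _ => by ring

lemma m3_m2 {m' k' : ℕ} (C : Matrix (Fin k') (Fin nd) ℝ) (B : Matrix (Fin m') (Fin m) ℝ)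
    (X : Fin n → Fin m → Fin nd → ℝ) : m3 C (m2 B X) = m2 B (m3 C X) := by
  funext p q k
  simp only [m2, m3, Finset.mul_sum]
  rw [Finset.sum_comm]
  exact Finset.sum_congr rfl fun _ _ => Finset.sum_congr rfl fun _ _ => by ring

end Tensor

end LotraAux

open LotraAux

/-- **One-layer LoTRA approximation.**  With basis functions bounded by `B > 0`,
error tensor `E = A_tg − A_pt` and given Tucker ranks, there exists a LoTRA update
`A_ft = A_pt + G ×₁ U1 ×₂ U2 ×₃ U3` with, for all `z`,
`‖Φ(z;A_ft) − Φ(z;A_tg)‖₂ ≤ B √(n n_d) (tail sums of squared singular values)^{1/2}`.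
(Singular-value indices are 0-based.) -/
theorem lotra_one_layer {n m nd : ℕ} (b : Fin nd → ℝ → ℝ) (B : ℝ) (hB : 0 < B)
    (hbound : ∀ (k : Fin nd) (t : ℝ), |b k t| ≤ B)
    (Apt Atg : Fin n → Fin m → Fin nd → ℝ)
    (r1 r2 r3 : ℕ) (hr1 : r1 ≤ n) (hr2 : r2 ≤ m) (hr3 : r3 ≤ nd) :
    ∃ (G : Fin r1 → Fin r2 → Fin r3 → ℝ)
      (U1 : Matrix (Fin n) (Fin r1) ℝ) (U2 : Matrix (Fin m) (Fin r2) ℝ)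
      (U3 : Matrix (Fin nd) (Fin r3) ℝ),
      ∀ z : Fin n → ℝ,
        euclNorm (fun q =>
            kanLayer b (fun p q k => Apt p q k + tucker G U1 U2 U3 p q k) z q -
            kanLayer b Atg z q) ≤
        B * Real.sqrt ((n : ℝ) * (nd : ℝ)) *
          Real.sqrt
            ((∑ r ∈ Finset.univ.filter (fun r : Fin n => r1 ≤ (r : ℕ)),
                sval (unfold1 (fun p q k => Atg p q k - Apt p q k)) r ^ 2) +
             (∑ r ∈ Finset.univ.filter (fun r : Fin m => r2 ≤ (r : ℕ)),
                sval (unfold2 (fun p q k => Atg p q k - Apt p q k)) r ^ 2) +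
             (∑ r ∈ Finset.univ.filter (fun r : Fin nd => r3 ≤ (r : ℕ)),
                sval (unfold3 (fun p q k => Atg p q k - Apt p q k)) r ^ 2)) := by
  classical
  set E : Fin n → Fin m → Fin nd → ℝ := fun p q k => Atg p q k - Apt p q k with hE
  obtain ⟨U1, hU1, hb1⟩ := core (unfold1 E) r1 hr1
  obtain ⟨U2, hU2, hb2⟩ := core (unfold2 E) r2 hr2
  obtain ⟨U3, hU3, hb3⟩ := core (unfold3 E) r3 hr3
  set G : Fin r1 → Fin r2 → Fin r3 → ℝ := m1 U1ᵀ (m2 U2ᵀ (m3 U3ᵀ E)) with hG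
  set T : Fin n → Fin m → Fin nd → ℝ :=
    m1 (U1 * U1ᵀ) (m2 (U2 * U2ᵀ) (m3 (U3 * U3ᵀ) E)) with hT
  set Z : Fin n → Fin m → Fin nd → ℝ :=
    fun p q k => E p q k - m3 (U3 * U3ᵀ) E p q k with hZ
  set Wt : Fin n → Fin m → Fin nd → ℝ :=
    fun p q k => (E p q k - m2 (U2 * U2ᵀ) E p q k) + m2 (U2 * U2ᵀ) Z p q k with hWt
  -- tucker identity
  have hstep1 : tucker G U1 U2 U3 = m1 U1 (m2 U2 (m3 U3 G)) := by
    funext p q k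
    simp only [tucker, m1, m2, m3, Finset.mul_sum]
    refine Finset.sum_congr rfl fun a _ => ?_
    refine Finset.sum_congr rfl fun b' _ => ?_
    refine Finset.sum_congr rfl fun c _ => by ring
  have htucker : tucker G U1 U2 U3 = T := by
    rw [hstep1, hG]
    simp only [m3_m1, m2_m1, m3_m2, m1_m1, m2_m2, m3_m3]
    exact hT.symm
  -- telescoping
  have e1 : ∀ p q k, m2 (U2 * U2ᵀ) Z p q k
      = m2 (U2 * U2ᵀ) E p q k - m2 (U2 * U2ᵀ) (m3 (U3 * U3ᵀ) E) p q k := by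
    intro p q k
    simp only [m2, hZ, mul_sub]
    exact Finset.sum_sub_distrib _ _
  have e2 : ∀ p q k, m1 (U1 * U1ᵀ) Wt p q k
      = m1 (U1 * U1ᵀ) E p q k
        - m1 (U1 * U1ᵀ) (m2 (U2 * U2ᵀ) (m3 (U3 * U3ᵀ) E)) p q k := by
    intro p q k
    simp only [m1, hWt]
    have h5 : ∀ p' : Fin n, (U1 * U1ᵀ) p p' *
        ((E p' q k - m2 (U2 * U2ᵀ) E p' q k) + m2 (U2 * U2ᵀ) Z p' q k)
        = (U1 * U1ᵀ) p p' * E p' q k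
          - (U1 * U1ᵀ) p p' * m2 (U2 * U2ᵀ) (m3 (U3 * U3ᵀ) E) p' q k := by
      intro p'
      rw [e1 p' q k]
      ring
    rw [Finset.sum_congr rfl fun p' _ => h5 p']
    exact Finset.sum_sub_distrib _ _
  have hdecomp : (fun p q k => E p q k - T p q k)
      = fun p q k => (E p q k - m1 (U1 * U1ᵀ) E p q k) + m1 (U1 * U1ᵀ) Wt p q k := by
    funext p q k
    rw [e2 p q k, hT]
    ring
  have hkey1 : tfrob (fun p q k => E p q k - T p q k)
      = tfrob (fun p q k => E p q k - m1 (U1 * U1ᵀ) E p q k)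
        + tfrob (fun p q k => m1 (U1 * U1ᵀ) Wt p q k) := by
    rw [hdecomp]
    exact tpyth U1 hU1 E Wt
  have hA1 : tfrob (fun p q k => E p q k - m1 (U1 * U1ᵀ) E p q k)
      ≤ ∑ r ∈ Finset.univ.filter (fun r : Fin n => r1 ≤ (r : ℕ)), sval (unfold1 E) r ^ 2 := by
    rw [tfrob_eq]
    have e : unfold1 (fun p q k => E p q k - m1 (U1 * U1ᵀ) E p q k)
        = unfold1 E - (U1 * U1ᵀ) * unfold1 E := by
      ext p qk
      simp [unfold1, m1, Matrix.mul_apply, Matrix.sub_apply]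
    rw [e]
    exact hb1
  have hC1 : tfrob (fun p q k => m1 (U1 * U1ᵀ) Wt p q k) ≤ tfrob Wt := tcontr U1 hU1 Wt
  have hW2 : tfrob Wt ≤ (∑ r ∈ Finset.univ.filter (fun r : Fin m => r2 ≤ (r : ℕ)),
      sval (unfold2 E) r ^ 2) + tfrob Z := by
    rw [← tfrob_sw12 Wt]
    have hsw : sw12 Wt = fun q p k => (sw12 E q p k - m1 (U2 * U2ᵀ) (sw12 E) q p k)
        + m1 (U2 * U2ᵀ) (sw12 Z) q p k := rfl
    rw [hsw, tpyth U2 hU2 (sw12 E) (sw12 Z)]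
    have hA2 : tfrob (fun q p k => sw12 E q p k - m1 (U2 * U2ᵀ) (sw12 E) q p k)
        ≤ ∑ r ∈ Finset.univ.filter (fun r : Fin m => r2 ≤ (r : ℕ)), sval (unfold2 E) r ^ 2 := by
      rw [tfrob_eq]
      have e : unfold1 (fun q p k => sw12 E q p k - m1 (U2 * U2ᵀ) (sw12 E) q p k)
          = unfold2 E - (U2 * U2ᵀ) * unfold2 E := by
        ext q pk
        simp [unfold1, unfold2, sw12, m1, Matrix.mul_apply, Matrix.sub_apply]
      rw [e]
      exact hb2
    have hC2 : tfrob (fun q p k => m1 (U2 * U2ᵀ) (sw12 Z) q p k) ≤ tfrob (sw12 Z) :=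
      tcontr U2 hU2 (sw12 Z)
    rw [tfrob_sw12 Z] at hC2
    linarith
  have hZ3 : tfrob Z ≤ ∑ r ∈ Finset.univ.filter (fun r : Fin nd => r3 ≤ (r : ℕ)),
      sval (unfold3 E) r ^ 2 := by
    rw [← tfrob_sw13 Z]
    have hsw : sw13 Z = fun k q p => sw13 E k q p - m1 (U3 * U3ᵀ) (sw13 E) k q p := rfl
    rw [hsw, tfrob_eq]
    have e : frobSq (unfold1 (fun k q p => sw13 E k q p - m1 (U3 * U3ᵀ) (sw13 E) k q p))
        = frobSq (unfold3 E - (U3 * U3ᵀ) * unfold3 E) := by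
      rw [frobSq, frobSq]
      refine Finset.sum_congr rfl fun k _ => ?_
      rw [Fintype.sum_prod_type, Fintype.sum_prod_type, Finset.sum_comm]
      refine Finset.sum_congr rfl fun p _ => Finset.sum_congr rfl fun q _ => ?_
      simp [unfold1, unfold3, sw13, m1, Matrix.sub_apply, Matrix.mul_apply]
    rw [e]
    exact hb3
  have htotal : tfrob (fun p q k => E p q k - T p q k)
      ≤ (∑ r ∈ Finset.univ.filter (fun r : Fin n => r1 ≤ (r : ℕ)), sval (unfold1 E) r ^ 2)
        + (∑ r ∈ Finset.univ.filter (fun r : Fin m => r2 ≤ (r : ℕ)), sval (unfold2 E) r ^ 2)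
        + (∑ r ∈ Finset.univ.filter (fun r : Fin nd => r3 ≤ (r : ℕ)), sval (unfold3 E) r ^ 2) := by
    linarith
  refine ⟨G, U1, U2, U3, ?_⟩
  intro z
  have hdiffq : ∀ q, kanLayer b (fun p q k => Apt p q k + tucker G U1 U2 U3 p q k) z q
      - kanLayer b Atg z q = ∑ p, ∑ k, (T p q k - E p q k) * b k (z p) := by
    intro q
    rw [kanLayer, kanLayer, ← Finset.sum_sub_distrib]
    refine Finset.sum_congr rfl fun p _ => ?_
    rw [← Finset.sum_sub_distrib]
    refine Finset.sum_congr rfl fun k _ => ?_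
    rw [← sub_mul]
    congr 1
    rw [htucker]
    simp only [hE]
    ring
  set S : ℝ :=
    (∑ r ∈ Finset.univ.filter (fun r : Fin n => r1 ≤ (r : ℕ)), sval (unfold1 E) r ^ 2)
      + (∑ r ∈ Finset.univ.filter (fun r : Fin m => r2 ≤ (r : ℕ)), sval (unfold2 E) r ^ 2)
      + (∑ r ∈ Finset.univ.filter (fun r : Fin nd => r3 ≤ (r : ℕ)), sval (unfold3 E) r ^ 2)
    with hS
  have hq2 : ∀ q, (∑ p, ∑ k, (T p q k - E p q k) * b k (z p)) ^ 2
      ≤ (B ^ 2 * ((n : ℝ) * nd)) * (∑ p, ∑ k, (E p q k - T p q k) ^ 2) := by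
    intro q
    have h1 : (∑ p, ∑ k, (T p q k - E p q k) * b k (z p))
        = ∑ x : Fin n × Fin nd, (T x.1 q x.2 - E x.1 q x.2) * b x.2 (z x.1) := by
      rw [Fintype.sum_prod_type]
    rw [h1]
    have h2 := Finset.sum_mul_sq_le_sq_mul_sq Finset.univ
      (fun x : Fin n × Fin nd => T x.1 q x.2 - E x.1 q x.2) (fun x => b x.2 (z x.1))
    have h3 : (∑ x : Fin n × Fin nd, (b x.2 (z x.1)) ^ 2) ≤ (n : ℝ) * nd * B ^ 2 := by
      calc (∑ x : Fin n × Fin nd, (b x.2 (z x.1)) ^ 2)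
          ≤ ∑ _x : Fin n × Fin nd, B ^ 2 := by
            refine Finset.sum_le_sum fun x _ => ?_
            have h5 := abs_le.mp (hbound x.2 (z x.1))
            nlinarith [h5.1, h5.2]
      _ = (n : ℝ) * nd * B ^ 2 := by
            rw [Finset.sum_const, Finset.card_univ, Fintype.card_prod, Fintype.card_fin,
              Fintype.card_fin, nsmul_eq_mul]
            push_cast
            ring
    have h6 : (∑ x : Fin n × Fin nd, (T x.1 q x.2 - E x.1 q x.2) ^ 2)
        = ∑ p, ∑ k, (E p q k - T p q k) ^ 2 := by
      rw [Fintype.sum_prod_type]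
      exact Finset.sum_congr rfl fun p _ => Finset.sum_congr rfl fun k _ => by ring
    calc (∑ x : Fin n × Fin nd, (T x.1 q x.2 - E x.1 q x.2) * b x.2 (z x.1)) ^ 2
        ≤ (∑ x : Fin n × Fin nd, (T x.1 q x.2 - E x.1 q x.2) ^ 2)
          * (∑ x : Fin n × Fin nd, (b x.2 (z x.1)) ^ 2) := h2
    _ ≤ (∑ x : Fin n × Fin nd, (T x.1 q x.2 - E x.1 q x.2) ^ 2) * ((n : ℝ) * nd * B ^ 2) := by
          exact mul_le_mul_of_nonneg_left h3 (Finset.sum_nonneg fun _ _ => sq_nonneg _)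
    _ = (B ^ 2 * ((n : ℝ) * nd)) * (∑ p, ∑ k, (E p q k - T p q k) ^ 2) := by
          rw [h6]; ring
  have hsum : (∑ q, (kanLayer b (fun p q k => Apt p q k + tucker G U1 U2 U3 p q k) z q
      - kanLayer b Atg z q) ^ 2) ≤ (B ^ 2 * ((n : ℝ) * nd)) * S := by
    calc (∑ q, (kanLayer b (fun p q k => Apt p q k + tucker G U1 U2 U3 p q k) z q
          - kanLayer b Atg z q) ^ 2)
        ≤ ∑ q, (B ^ 2 * ((n : ℝ) * nd)) * (∑ p, ∑ k, (E p q k - T p q k) ^ 2) := by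
          refine Finset.sum_le_sum fun q _ => ?_
          rw [hdiffq q]
          exact hq2 q
    _ = (B ^ 2 * ((n : ℝ) * nd)) * tfrob (fun p q k => E p q k - T p q k) := by
          rw [← Finset.mul_sum]
          congr 1
          exact Finset.sum_comm
    _ ≤ (B ^ 2 * ((n : ℝ) * nd)) * S := by
          refine mul_le_mul_of_nonneg_left ?_ (by positivity)
          rw [hS]
          exact htotal
  have h9 : euclNorm (fun q => kanLayer b (fun p q k => Apt p q k + tucker G U1 U2 U3 p q k) z q
      - kanLayer b Atg z q) ≤ Real.sqrt (B ^ 2 * (((n : ℝ) * nd) * S)) := by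
    unfold euclNorm
    refine Real.sqrt_le_sqrt ?_
    calc (∑ q, (kanLayer b (fun p q k => Apt p q k + tucker G U1 U2 U3 p q k) z q
          - kanLayer b Atg z q) ^ 2) ≤ (B ^ 2 * ((n : ℝ) * nd)) * S := hsum
    _ = B ^ 2 * (((n : ℝ) * nd) * S) := by ring
  have h10 : Real.sqrt (B ^ 2 * (((n : ℝ) * nd) * S))
      = B * Real.sqrt ((n : ℝ) * (nd : ℝ)) * Real.sqrt S := by
    rw [Real.sqrt_mul (sq_nonneg B), Real.sqrt_sq hB.le,
      Real.sqrt_mul (by positivity : (0:ℝ) ≤ (n : ℝ) * nd), ← mul_assoc]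
  rw [h10] at h9
  exact h9
end
end
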